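/- (Huang–Kavitha characterization) Let I be a MatP instance and M a matching. Then M is popular for I if and only if the subgraph G_M (obtained from G^I by deleting all (+,+) edges) satisfies all three of the following: (i) G_M contains no alternating cycle with respect to M that contains a (−,−) edge; (ii) G_M contains no alternating path with respect to M starting from a vertex unmatched in M that contains a (−,−) edge; and (iii) G_M contains no alternating path with respect to M whose both end edges are (−,−) edges. -/

import Mathlib

open Classical

/-- An instance of matching under preferences (MatP): a bipartite graph on
workers `W` and firms `F` together with, for each agent, a strict linear order
on its neighbors (`pref x y z` means `x` strictly prefers `y` to `z`). -/
structure MatP (α : Type*) where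
  W : Finset α
  F : Finset α
  disjWF : Disjoint W F
  adj : α → α → Prop
  adj_symm : ∀ x y, adj x y → adj y x
  adj_loopless : ∀ x, ¬ adj x x
  adj_bipartite : ∀ x y, adj x y → (x ∈ W ∧ y ∈ F) ∨ (x ∈ F ∧ y ∈ W)
  pref : α → α → α → Prop
  pref_adj : ∀ x y z, pref x y z → adj x y ∧ adj x z
  pref_trans : ∀ x y z w, pref x y z → pref x z w → pref x y w
  pref_irrefl : ∀ x y, ¬ pref x y y
  pref_total : ∀ x y z, adj x y → adj x z → y ≠ z → pref x y z ∨ pref x z y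

/-- `M` is a matching of instance `I`, encoded as a symmetric partial partner
function: `M x = some y` means the edge `{x,y}` belongs to the matching. -/
def IsMatching {α : Type*} (I : MatP α) (M : α → Option α) : Prop :=
  (∀ x y, M x = some y → I.adj x y) ∧ (∀ x y, M x = some y → M y = some x)

/-- Agent `x` prefers (partner) option `o` to option `o'`:
being matched beats being unmatched, and among partners `x` uses `I.pref`. -/
def Better {α : Type*} (I : MatP α) (x : α) : Option α → Option α → Prop
  | some _, none => True
  | some y, some z => I.pref x y z
  | none, _ => False

/-- The vote of agent `x` between partner options `o` and `o'`. -/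
noncomputable def voteO {α : Type*} (I : MatP α) (x : α) (o o' : Option α) : ℤ :=
  if Better I x o o' then 1 else if Better I x o' o then -1 else 0

/-- Popularity margin `Δ^I(M,M')`: the sum of all agents' votes. -/
noncomputable def margin {α : Type*} [DecidableEq α]
    (I : MatP α) (M M' : α → Option α) : ℤ :=
  ∑ x ∈ I.W ∪ I.F, voteO I x (M x) (M' x)

/-- `M` is popular for `I`: it does not lose against any matching. -/
def Popular {α : Type*} [DecidableEq α] (I : MatP α) (M : α → Option α) : Prop :=
  ∀ M', IsMatching I M' → 0 ≤ margin I M M'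

/-- `{x,y}` is a `(−,−)` edge with respect to `M`: a non-matching edge both of
whose endpoints prefer it to their situation in `M`. -/
def MinusMinus {α : Type*} (I : MatP α) (M : α → Option α) (x y : α) : Prop :=
  I.adj x y ∧ M x ≠ some y ∧ Better I x (some y) (M x) ∧ Better I y (some x) (M y)

/-- `{x,y}` is an edge of the subgraph `G_M` (all `(+,+)` edges deleted):
it is a matching edge or at least one endpoint prefers it to `M`. -/
def InGM {α : Type*} (I : MatP α) (M : α → Option α) (x y : α) : Prop :=
  I.adj x y ∧ (M x = some y ∨ Better I x (some y) (M x) ∨ Better I y (some x) (M y))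

/-- `v 0, v 1, …, v n` is an alternating path with respect to `M` in `G_M`:
distinct vertices, consecutive edges in `G_M`, edges alternately in and out of `M`. -/
def IsAltPath {α : Type*} (I : MatP α) (M : α → Option α) (n : ℕ) (v : ℕ → α) : Prop :=
  0 < n ∧
  (∀ i j, i ≤ n → j ≤ n → v i = v j → i = j) ∧
  (∀ i, i < n → InGM I M (v i) (v (i+1))) ∧
  (∀ i, i + 2 ≤ n → (M (v i) = some (v (i+1)) ↔ ¬ M (v (i+1)) = some (v (i+2))))

/-- `v 0, v 1, …, v n = v 0` is an alternating cycle with respect to `M` in `G_M`. -/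
def IsAltCycle {α : Type*} (I : MatP α) (M : α → Option α) (n : ℕ) (v : ℕ → α) : Prop :=
  2 ≤ n ∧ v n = v 0 ∧
  (∀ i j, i < n → j < n → v i = v j → i = j) ∧
  (∀ i, i < n → InGM I M (v i) (v (i+1))) ∧
  (∀ i, i + 2 ≤ n → (M (v i) = some (v (i+1)) ↔ ¬ M (v (i+1)) = some (v (i+2)))) ∧
  (M (v (n-1)) = some (v 0) ↔ ¬ M (v 0) = some (v 1))

set_option linter.unusedSectionVars false

section Basics

variable {α : Type*} [DecidableEq α] {I : MatP α} {M : α → Option α}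

lemma adj_ne {x y : α} (h : I.adj x y) : x ≠ y := by
  rintro rfl; exact I.adj_loopless x h

lemma adj_mem_left {x y : α} (h : I.adj x y) : x ∈ I.W ∪ I.F := by
  rcases I.adj_bipartite x y h with ⟨h1, _⟩ | ⟨h1, _⟩ <;> simp [h1]

lemma adj_W_iff {x y : α} (h : I.adj x y) : x ∈ I.W ↔ ¬ (y ∈ I.W) := by
  have hd := I.disjWF
  rw [Finset.disjoint_left] at hd
  rcases I.adj_bipartite x y h with ⟨h1, h2⟩ | ⟨h1, h2⟩
  · exact ⟨fun _ h3 => hd h3 h2, fun _ => h1⟩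
  · constructor
    · intro h3; exact absurd h1 (fun hc => hd h3 hc)
    · intro h3; exact absurd h2 (fun hc => (h3 hc).elim)

lemma better_asymm {x : α} {o o' : Option α} (h : Better I x o o') : ¬ Better I x o' o := by
  match o, o' with
  | some y, none => exact fun hc => hc.elim
  | some y, some z => exact fun hc => I.pref_irrefl x y (I.pref_trans x y z y h hc)
  | none, o' => exact h.elim

lemma better_none {x : α} {o : Option α} : ¬ Better I x none o := fun h => h.elim

lemma voteO_le_one (x : α) (o o' : Option α) : voteO I x o o' ≤ 1 := by
  unfold voteO; split_ifs <;> omega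

lemma voteO_self (x : α) (o : Option α) : voteO I x o o = 0 := by
  unfold voteO
  have : ¬ Better I x o o := fun h => better_asymm h h
  simp [this]

lemma voteO_of_better {x : α} {o o' : Option α} (h : Better I x o' o) : voteO I x o o' = -1 := by
  unfold voteO
  simp [better_asymm h, h]

lemma voteO_some_none {x : α} {a : α} : voteO I x (some a) none = 1 := by
  unfold voteO
  have : Better I x (some a) none := trivial
  simp [this]

/-- symmetric matching facts -/
lemma matching_symm (hM : IsMatching I M) {x y : α} (h : M x = some y) : M y = some x :=
  hM.2 x y h

lemma mm_symm (hM : IsMatching I M) {x y : α} (h : MinusMinus I M x y) :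
    MinusMinus I M y x := by
  obtain ⟨ha, hne, hb1, hb2⟩ := h
  refine ⟨I.adj_symm x y ha, fun hc => hne (matching_symm hM hc), hb2, hb1⟩

lemma inGM_symm (hM : IsMatching I M) {x y : α} (h : InGM I M x y) : InGM I M y x := by
  obtain ⟨ha, h2⟩ := h
  refine ⟨I.adj_symm x y ha, ?_⟩
  rcases h2 with h2 | h2 | h2
  · exact Or.inl (matching_symm hM h2)
  · exact Or.inr (Or.inr h2)
  · exact Or.inr (Or.inl h2)

lemma mm_inGM {x y : α} (h : MinusMinus I M x y) : InGM I M x y :=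
  ⟨h.1, Or.inr (Or.inl h.2.2.1)⟩

/-- vote of x comparing M-partner with a new partner b it is not M-matched to -/
lemma vote_pm (hM : IsMatching I M) {x b : α} (hadj : I.adj x b) (hne : M x ≠ some b)
    (hnb : ¬ Better I x (some b) (M x)) : voteO I x (M x) (some b) = 1 := by
  match h : M x with
  | none =>
    rw [h] at hnb
    exact absurd trivial hnb
  | some a =>
    rw [h] at hnb hne
    have haa : I.adj x a := hM.1 x a h
    have hab : a ≠ b := fun hc => hne (by rw [hc])
    have : I.pref x a b := by
      rcases I.pref_total x a b haa hadj hab with hp | hp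
      · exact hp
      · exact absurd hp hnb
    unfold voteO
    have hb : Better I x (some a) (some b) := this
    simp [hb]

end Basics
section Sums

variable {α : Type*} [DecidableEq α]

lemma sum_range_two_mul (m : ℕ) (f : ℕ → ℤ) :
    ∑ k ∈ Finset.range (2*m), f k = ∑ k ∈ Finset.range m, (f (2*k) + f (2*k+1)) := by
  induction m with
  | zero => simp
  | succ m ih =>
    have h : 2*(m+1) = (2*m+1)+1 := by ring
    rw [h, Finset.sum_range_succ, Finset.sum_range_succ, Finset.sum_range_succ, ← ih]
    ring

lemma pair_sum_nonneg (n : ℕ) (T : Finset α) (f : α → ℤ) (p : α → Option α)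
    (hcard : T.card ≤ n)
    (hclosed : ∀ x ∈ T, ∀ y, p x = some y → y ∈ T ∧ p y = some x ∧ y ≠ x)
    (h1 : ∀ x ∈ T, p x = none → 0 ≤ f x)
    (h2 : ∀ x ∈ T, ∀ y, p x = some y → 0 ≤ f x + f y) :
    0 ≤ ∑ x ∈ T, f x := by
  induction n generalizing T with
  | zero =>
    have : T = ∅ := Finset.card_eq_zero.mp (Nat.le_zero.mp hcard)
    simp [this]
  | succ n ih =>
    rcases T.eq_empty_or_nonempty with rfl | ⟨x, hx⟩
    · simp
    cases hp : p x with
    | none =>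
      rw [← Finset.sum_erase_add T f hx]
      have hsub : 0 ≤ ∑ z ∈ T.erase x, f z := by
        refine ih (T.erase x) ?_ ?_ ?_ ?_
        · have := Finset.card_erase_of_mem hx
          omega
        · intro z hz y hpz
          obtain ⟨hyT, hpy, hyz⟩ := hclosed z (Finset.mem_of_mem_erase hz) y hpz
          refine ⟨Finset.mem_erase.mpr ⟨?_, hyT⟩, hpy, hyz⟩
          rintro rfl; rw [hp] at hpy; exact nomatch hpy
        · intro z hz; exact h1 z (Finset.mem_of_mem_erase hz)
        · intro z hz y hpz; exact h2 z (Finset.mem_of_mem_erase hz) y hpz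
      have := h1 x hx hp
      omega
    | some y =>
      obtain ⟨hyT, hpy, hyx⟩ := hclosed x hx y hp
      have hyT' : y ∈ T.erase x := Finset.mem_erase.mpr ⟨hyx, hyT⟩
      rw [← Finset.sum_erase_add T f hx, ← Finset.sum_erase_add (T.erase x) f hyT']
      have hsub : 0 ≤ ∑ z ∈ (T.erase x).erase y, f z := by
        refine ih _ ?_ ?_ ?_ ?_
        · have h1c := Finset.card_erase_of_mem hx
          have h2c := Finset.card_erase_of_mem hyT'
          have : 1 ≤ T.card := Finset.card_pos.mpr ⟨x, hx⟩
          omega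
        · intro z hz w hpz
          have hzT : z ∈ T := Finset.mem_of_mem_erase (Finset.mem_of_mem_erase hz)
          obtain ⟨hwT, hpw, hwz⟩ := hclosed z hzT w hpz
          have hwx : w ≠ x := by
            rintro rfl; rw [hp] at hpw
            have : z = y := (Option.some.inj hpw).symm
            subst this
            exact (Finset.mem_erase.mp hz).1 rfl
          have hwy : w ≠ y := by
            rintro rfl; rw [hpy] at hpw
            have : z = x := (Option.some.inj hpw).symm
            subst this
            exact (Finset.mem_erase.mp (Finset.mem_of_mem_erase hz)).1 rfl
          exact ⟨Finset.mem_erase.mpr ⟨hwy, Finset.mem_erase.mpr ⟨hwx, hwT⟩⟩, hpw, hwz⟩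
        · intro z hz
          exact h1 z (Finset.mem_of_mem_erase (Finset.mem_of_mem_erase hz))
        · intro z hz w hpz
          exact h2 z (Finset.mem_of_mem_erase (Finset.mem_of_mem_erase hz)) w hpz
      have := h2 x hx y hp
      omega

lemma sum_nonpos_subset {s t : Finset ℕ} (f : ℕ → ℤ) (h : s ⊆ t) (hf : ∀ i ∈ t, f i ≤ 0) :
    ∑ i ∈ t, f i ≤ ∑ i ∈ s, f i := by
  have h2 := Finset.sum_le_sum_of_subset_of_nonneg (f := fun i => -f i) h
    (fun i hi _ => by simpa using neg_nonneg.mpr (hf i hi))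
  simp only [Finset.sum_neg_distrib] at h2
  linarith

lemma sum_single_indicator (T : Finset α) (o : Option α) :
    ∑ x ∈ T, (if o = some x then (1:ℤ) else 0) ≤ 1 := by
  cases o with
  | none => simp
  | some a =>
    have : ∀ x ∈ T, (if some a = some x then (1:ℤ) else 0) = if x = a then 1 else 0 := by
      intro x _
      by_cases h : x = a <;> simp [h]
      intro hc; exact h hc.symm
    rw [Finset.sum_congr rfl this, Finset.sum_ite_eq' T a (fun _ => (1:ℤ))]
    split_ifs <;> omega

end Sums
section Switch

variable {α : Type*} [DecidableEq α] {I : MatP α} {M : α → Option α}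

lemma even_2k (k : ℕ) : Even (2*k) := ⟨k, (two_mul k)⟩
lemma odd_2k1 (k : ℕ) : Odd (2*k+1) := ⟨k, rfl⟩

lemma switch_path (hM : IsMatching I M) (m : ℕ) (v : ℕ → α)
    (hinj : ∀ i j, i ≤ 2*m+1 → j ≤ 2*m+1 → v i = v j → i = j)
    (hedge : ∀ i, i < 2*m+1 → InGM I M (v i) (v (i+1)))
    (hpat : ∀ i, i < 2*m+1 → (M (v i) = some (v (i+1)) ↔ Odd i))
    (hend : MinusMinus I M (v (2*m)) (v (2*m+1)))
    (hstart : M (v 0) = none ∨ (1 ≤ m ∧ MinusMinus I M (v 0) (v 1))) :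
    ∃ M', IsMatching I M' ∧ margin I M M' < 0 := by
  classical
  set n := 2*m+1 with hn
  -- basic pattern facts
  have pOdd : ∀ i, Odd i → i < n → M (v i) = some (v (i+1)) := by
    intro i hi hilt; exact (hpat i hilt).mpr hi
  have pEvenNe : ∀ i, Even i → i < n → M (v i) ≠ some (v (i+1)) := by
    intro i hi hilt hc
    have := (hpat i hilt).mp hc
    rw [Nat.odd_iff] at this; rw [Nat.even_iff] at hi; omega
  have pEvenPrev : ∀ i, Even i → 1 ≤ i → i ≤ n → M (v i) = some (v (i-1)) := by
    intro i hi h1 hle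
    have hodd : Odd (i-1) := by
      rw [Nat.odd_iff]; rw [Nat.even_iff] at hi; omega
    have hlt : i - 1 < n := by omega
    have := matching_symm hM (pOdd (i-1) hodd hlt)
    have he : i - 1 + 1 = i := by omega
    rwa [he] at this
  have hoffM : ∀ x, (∀ k, k ≤ n → v k ≠ x) → ∀ j, 1 ≤ j → j < n → M x ≠ some (v j) := by
    intro x hx j h1 hj hc
    have hsym := matching_symm hM hc
    rcases Nat.even_or_odd j with hpar | hpar
    · have h2 : 2 ≤ j := by rw [Nat.even_iff] at hpar; omega
      have := pEvenPrev j hpar h1 (by omega)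
      rw [this] at hsym
      have hx' : x = v (j-1) := (Option.some.inj hsym).symm
      exact hx (j-1) (by omega) hx'.symm
    · have := pOdd j hpar hj
      rw [this] at hsym
      have hx' : x = v (j+1) := (Option.some.inj hsym).symm
      exact hx (j+1) (by omega) hx'.symm
  -- the switched matching
  obtain ⟨M', key, key2⟩ : ∃ M' : α → Option α,
      (∀ k, k ≤ n → M' (v k) = if Even k then some (v (k+1)) else some (v (k-1))) ∧
      (∀ x, (∀ k, k ≤ n → v k ≠ x) →
        M' x = if (M x = some (v 0) ∨ M x = some (v n)) then none else M x) := by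
    refine ⟨fun x => if h : ∃ k, k ≤ n ∧ v k = x then
        (if Even (Classical.choose h) then some (v (Classical.choose h + 1))
          else some (v (Classical.choose h - 1)))
      else (if M x = some (v 0) ∨ M x = some (v n) then none else M x), ?_, ?_⟩
    · intro k hk
      have hex : ∃ j, j ≤ n ∧ v j = v k := ⟨k, hk, rfl⟩
      simp only [dif_pos hex]
      have hsp := Classical.choose_spec hex
      have hck : Classical.choose hex = k := hinj _ _ hsp.1 hk hsp.2
      rw [hck]
    · intro x hx
      have hnex : ¬ ∃ k, k ≤ n ∧ v k = x := by
        rintro ⟨k, hk, he⟩; exact hx k hk he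
      simp only [dif_neg hnex]
  have keyE : ∀ k, k ≤ n → Even k → M' (v k) = some (v (k+1)) := by
    intro k hk he; rw [key k hk, if_pos he]
  have keyO : ∀ k, k ≤ n → Odd k → M' (v k) = some (v (k-1)) := by
    intro k hk ho; rw [key k hk, if_neg (by simp [Nat.not_even_iff_odd.mpr ho])]
  have hEltn : ∀ k, k ≤ n → Even k → k < n := by
    intro k hk he; rw [Nat.even_iff] at he; omega
  -- M' is a matching
  have hmatch : IsMatching I M' := by
    constructor
    · intro x y hxy
      by_cases hon : ∃ k, k ≤ n ∧ v k = x
      · obtain ⟨k, hk, rfl⟩ := hon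
        rcases Nat.even_or_odd k with hpar | hpar
        · rw [keyE k hk hpar] at hxy
          have := (hedge k (hEltn k hk hpar)).1
          rwa [← Option.some.inj hxy]
        · rw [keyO k hk hpar] at hxy
          have h1 : 1 ≤ k := by rw [Nat.odd_iff] at hpar; omega
          have := I.adj_symm _ _ (hedge (k-1) (by omega)).1
          have he : k - 1 + 1 = k := by omega
          rw [he] at this
          rwa [← Option.some.inj hxy]
      · push_neg at hon
        rw [key2 x (fun k hk => hon k hk)] at hxy
        split_ifs at hxy with hg
        · exact hM.1 x y hxy
    · intro x y hxy
      by_cases hon : ∃ k, k ≤ n ∧ v k = x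
      · obtain ⟨k, hk, rfl⟩ := hon
        rcases Nat.even_or_odd k with hpar | hpar
        · rw [keyE k hk hpar] at hxy
          have hy : y = v (k+1) := (Option.some.inj hxy).symm
          subst hy
          have hkn : k < n := hEltn k hk hpar
          have := keyO (k+1) (by omega) (by rcases hpar with ⟨r, hr⟩; exact ⟨r, by omega⟩)
          simpa using this
        · rw [keyO k hk hpar] at hxy
          have hy : y = v (k-1) := (Option.some.inj hxy).symm
          subst hy
          have h1 : 1 ≤ k := by rw [Nat.odd_iff] at hpar; omega
          have := keyE (k-1) (by omega) (by rw [Nat.even_iff]; rw [Nat.odd_iff] at hpar; omega)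
          have he : k - 1 + 1 = k := by omega
          rwa [he] at this
      · push_neg at hon
        rw [key2 x (fun k hk => hon k hk)] at hxy
        split_ifs at hxy with hg
        · push_neg at hg
          have hyoff : ∀ k, k ≤ n → v k ≠ y := by
            intro j hj hc
            subst hc
            rcases Nat.eq_zero_or_pos j with rfl | hj1
            · exact hg.1 hxy
            rcases Nat.lt_or_ge j n with hjn | hjn
            · exact hoffM x hon j hj1 hjn hxy
            · have : j = n := by omega
              subst this
              exact hg.2 hxy
          rw [key2 y hyoff]
          have hsym := matching_symm hM hxy
          rw [if_neg, hsym]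
          push_neg
          constructor
          · rw [hsym]; intro hc
            exact hon 0 (by omega) (Option.some.inj hc).symm
          · rw [hsym]; intro hc
            exact hon n (le_refl n) (Option.some.inj hc).symm
  refine ⟨M', hmatch, ?_⟩
  -- margin computation
  set g : α → ℤ := fun x => voteO I x (M x) (M' x) with hg
  have hvmem : ∀ k, k ≤ n → v k ∈ I.W ∪ I.F := by
    intro k hk
    rcases Nat.lt_or_ge k n with h | h
    · exact adj_mem_left (hedge k h).1
    · have : k = n := by omega
      subst this
      exact adj_mem_left (I.adj_symm _ _ (hedge (2*m) (by omega)).1)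
  set Pset := (Finset.range (n+1)).image v with hPset
  have hPsub : Pset ⊆ I.W ∪ I.F := by
    intro x hx
    rw [hPset, Finset.mem_image] at hx
    obtain ⟨k, hk, rfl⟩ := hx
    exact hvmem k (by have := Finset.mem_range.mp hk; omega)
  have hsplit : margin I M M' = (∑ x ∈ (I.W ∪ I.F) \ Pset, g x) + ∑ x ∈ Pset, g x :=
    (Finset.sum_sdiff hPsub).symm
  have himg : ∑ x ∈ Pset, g x = ∑ k ∈ Finset.range (n+1), g (v k) := by
    rw [hPset]
    rw [Finset.sum_image]
    intro i hi j hj hij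
    exact hinj i j (by have := Finset.mem_range.mp hi; omega) (by have := Finset.mem_range.mp hj; omega) hij
  have hn2 : n + 1 = 2*(m+1) := by omega
  have hpairsum : ∑ k ∈ Finset.range (n+1), g (v k)
      = ∑ k ∈ Finset.range (m+1), (g (v (2*k)) + g (v (2*k+1))) := by
    rw [hn2, sum_range_two_mul]
  -- pair bounds
  have hpairvote : ∀ k, k < m+1 →
      g (v (2*k)) = voteO I (v (2*k)) (M (v (2*k))) (some (v (2*k+1))) ∧
      g (v (2*k+1)) = voteO I (v (2*k+1)) (M (v (2*k+1))) (some (v (2*k))) := by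
    intro k hk
    have h1 : 2*k ≤ n := by omega
    have h2 : 2*k+1 ≤ n := by omega
    constructor
    · rw [hg]; simp only; rw [keyE (2*k) h1 (even_2k k)]
    · rw [hg]; simp only; rw [keyO (2*k+1) h2 (odd_2k1 k)]
      simp
  have hpair : ∀ k, k < m+1 → g (v (2*k)) + g (v (2*k+1)) ≤ 0 := by
    intro k hk
    obtain ⟨e1, e2⟩ := hpairvote k hk
    have hlt : 2*k < n := by omega
    rcases (hedge (2*k) hlt).2 with hc | hc | hc
    · exact absurd hc (pEvenNe (2*k) (even_2k k) hlt)
    · rw [e1, voteO_of_better hc]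
      have := voteO_le_one (I := I) (v (2*k+1)) (M (v (2*k+1))) (some (v (2*k)))
      rw [e2]; omega
    · rw [e2, voteO_of_better hc]
      have := voteO_le_one (I := I) (v (2*k)) (M (v (2*k))) (some (v (2*k+1)))
      rw [e1]; omega
  have hpairMM : ∀ k, k < m+1 → MinusMinus I M (v (2*k)) (v (2*k+1)) →
      g (v (2*k)) + g (v (2*k+1)) ≤ -2 := by
    intro k hk hmm
    obtain ⟨e1, e2⟩ := hpairvote k hk
    rw [e1, e2, voteO_of_better hmm.2.2.1, voteO_of_better (mm_symm hM hmm).2.2.1]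
    omega
  -- bound for off-path part
  have hoffbound : ∀ x ∈ (I.W ∪ I.F) \ Pset,
      g x ≤ (if M (v n) = some x then (1:ℤ) else 0) + (if M (v 0) = some x then (1:ℤ) else 0) := by
    intro x hx
    have hxoff : ∀ k, k ≤ n → v k ≠ x := by
      intro k hk hc
      rw [Finset.mem_sdiff, hPset] at hx
      exact hx.2 (Finset.mem_image.mpr ⟨k, Finset.mem_range.mpr (by omega), hc⟩)
    have ind_nonneg : ∀ (o : Option α), (0:ℤ) ≤ (if o = some x then (1:ℤ) else 0) := by
      intro o; split_ifs <;> omega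
    rw [hg]; simp only
    rw [key2 x hxoff]
    by_cases hgd : M x = some (v 0) ∨ M x = some (v n)
    · rw [if_pos hgd]
      rcases hgd with hc | hc
      · rw [hc, voteO_some_none, if_pos (matching_symm hM hc)]
        have := ind_nonneg (M (v n)); linarith
      · rw [hc, voteO_some_none, if_pos (matching_symm hM hc)]
        have := ind_nonneg (M (v 0)); linarith
    · rw [if_neg hgd, voteO_self]
      have h1 := ind_nonneg (M (v n)); have h2 := ind_nonneg (M (v 0)); linarith
  -- assemble
  have hrest2 : ∑ x ∈ (I.W ∪ I.F) \ Pset, g x ≤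
      (∑ x ∈ (I.W ∪ I.F) \ Pset, (if M (v n) = some x then (1:ℤ) else 0)) +
      (∑ x ∈ (I.W ∪ I.F) \ Pset, (if M (v 0) = some x then (1:ℤ) else 0)) := by
    rw [← Finset.sum_add_distrib]
    exact Finset.sum_le_sum hoffbound
  have hindn := sum_single_indicator ((I.W ∪ I.F) \ Pset) (M (v n))
  have hind0 := sum_single_indicator ((I.W ∪ I.F) \ Pset) (M (v 0))
  rw [hsplit, himg, hpairsum]
  rcases hstart with hs0 | ⟨hm1, hsmm⟩
  · have hsum1 : ∑ k ∈ Finset.range (m+1), (g (v (2*k)) + g (v (2*k+1))) ≤ -2 := by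
      have hsub : ({m} : Finset ℕ) ⊆ Finset.range (m+1) := by
        intro i hi; rw [Finset.mem_singleton] at hi; subst hi; exact Finset.mem_range.mpr (by omega)
      have hle := sum_nonpos_subset _ hsub (fun k hk => hpair k (Finset.mem_range.mp hk))
      have hm2 := hpairMM m (by omega) hend
      rw [Finset.sum_singleton] at hle
      linarith
    have hind0' : ∑ x ∈ (I.W ∪ I.F) \ Pset, (if M (v 0) = some x then (1:ℤ) else 0) = 0 := by
      rw [hs0]; simp
    linarith
  · have h0 := hpairMM 0 (by omega) (by simpa using hsmm)
    have hmm2 := hpairMM m (by omega) hend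
    have hsum1 : ∑ k ∈ Finset.range (m+1), (g (v (2*k)) + g (v (2*k+1))) ≤ -4 := by
      have hsub : ({0, m} : Finset ℕ) ⊆ Finset.range (m+1) := by
        intro i hi; rw [Finset.mem_insert, Finset.mem_singleton] at hi
        rcases hi with rfl | rfl <;> exact Finset.mem_range.mpr (by omega)
      have hle := sum_nonpos_subset _ hsub (fun k hk => hpair k (Finset.mem_range.mp hk))
      rw [Finset.sum_pair (by omega : (0:ℕ) ≠ m)] at hle
      linarith
    linarith

end Switch
section Switch2

variable {α : Type*} [DecidableEq α] {I : MatP α} {M : α → Option α}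

lemma switch_cycle (hM : IsMatching I M) (m : ℕ) (v : ℕ → α) (hm : 1 ≤ m)
    (hinj : ∀ i j, i < 2*m → j < 2*m → v i = v j → i = j)
    (hvn : v (2*m) = v 0)
    (hedge : ∀ i, i < 2*m → InGM I M (v i) (v (i+1)))
    (hpat : ∀ i, i < 2*m → (M (v i) = some (v (i+1)) ↔ Odd i))
    (hmm : MinusMinus I M (v 0) (v 1)) :
    ∃ M', IsMatching I M' ∧ margin I M M' < 0 := by
  classical
  set n := 2*m with hn
  have pOdd : ∀ i, Odd i → i < n → M (v i) = some (v (i+1)) := by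
    intro i hi hilt; exact (hpat i hilt).mpr hi
  have pEvenNe : ∀ i, Even i → i < n → M (v i) ≠ some (v (i+1)) := by
    intro i hi hilt hc
    have := (hpat i hilt).mp hc
    rw [Nat.odd_iff] at this; rw [Nat.even_iff] at hi; omega
  have pEvenPrev : ∀ i, Even i → 1 ≤ i → i < n → M (v i) = some (v (i-1)) := by
    intro i hi h1 hle
    have hodd : Odd (i-1) := by
      rw [Nat.odd_iff]; rw [Nat.even_iff] at hi; omega
    have hlt : i - 1 < n := by omega
    have := matching_symm hM (pOdd (i-1) hodd hlt)
    have he : i - 1 + 1 = i := by omega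
    rwa [he] at this
  have pZero : M (v 0) = some (v (n-1)) := by
    have hodd : Odd (n-1) := by rw [Nat.odd_iff]; omega
    have := pOdd (n-1) hodd (by omega)
    have he : n - 1 + 1 = n := by omega
    rw [he, hvn] at this
    exact matching_symm hM this
  have hoffM : ∀ x, (∀ k, k < n → v k ≠ x) → ∀ j, j < n → M x ≠ some (v j) := by
    intro x hx j hj hc
    have hsym := matching_symm hM hc
    rcases Nat.eq_zero_or_pos j with rfl | hj1
    · rw [pZero] at hsym
      exact hx (n-1) (by omega) ((Option.some.inj hsym).symm).symm
    rcases Nat.even_or_odd j with hpar | hpar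
    · have h2 : 2 ≤ j := by rw [Nat.even_iff] at hpar; omega
      rw [pEvenPrev j hpar hj1 hj] at hsym
      exact hx (j-1) (by omega) ((Option.some.inj hsym).symm).symm
    · rw [pOdd j hpar hj] at hsym
      have hx' : x = v (j+1) := (Option.some.inj hsym).symm
      rcases Nat.lt_or_ge (j+1) n with h | h
      · exact hx (j+1) h hx'.symm
      · have : j + 1 = n := by omega
        rw [this, hvn] at hx'
        exact hx 0 (by omega) hx'.symm
  obtain ⟨M', key, key2⟩ : ∃ M' : α → Option α,
      (∀ k, k < n → M' (v k) = if Even k then some (v (k+1)) else some (v (k-1))) ∧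
      (∀ x, (∀ k, k < n → v k ≠ x) → M' x = M x) := by
    refine ⟨fun x => if h : ∃ k, k < n ∧ v k = x then
        (if Even (Classical.choose h) then some (v (Classical.choose h + 1))
          else some (v (Classical.choose h - 1)))
      else M x, ?_, ?_⟩
    · intro k hk
      have hex : ∃ j, j < n ∧ v j = v k := ⟨k, hk, rfl⟩
      simp only [dif_pos hex]
      have hsp := Classical.choose_spec hex
      have hck : Classical.choose hex = k := hinj _ _ hsp.1 hk hsp.2
      rw [hck]
    · intro x hx
      have hnex : ¬ ∃ k, k < n ∧ v k = x := by
        rintro ⟨k, hk, he⟩; exact hx k hk he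
      simp only [dif_neg hnex]
  have keyE : ∀ k, k < n → Even k → M' (v k) = some (v (k+1)) := by
    intro k hk he; rw [key k hk, if_pos he]
  have keyO : ∀ k, k < n → Odd k → M' (v k) = some (v (k-1)) := by
    intro k hk ho; rw [key k hk, if_neg (by simp [Nat.not_even_iff_odd.mpr ho])]
  have hElt : ∀ k, k < n → Even k → k + 1 < n := by
    intro k hk he; rw [Nat.even_iff] at he; omega
  have hmatch : IsMatching I M' := by
    constructor
    · intro x y hxy
      by_cases hon : ∃ k, k < n ∧ v k = x
      · obtain ⟨k, hk, rfl⟩ := hon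
        rcases Nat.even_or_odd k with hpar | hpar
        · rw [keyE k hk hpar] at hxy
          have := (hedge k hk).1
          rwa [← Option.some.inj hxy]
        · rw [keyO k hk hpar] at hxy
          have h1 : 1 ≤ k := by rw [Nat.odd_iff] at hpar; omega
          have := I.adj_symm _ _ (hedge (k-1) (by omega)).1
          have he : k - 1 + 1 = k := by omega
          rw [he] at this
          rwa [← Option.some.inj hxy]
      · push_neg at hon
        rw [key2 x (fun k hk => hon k hk)] at hxy
        exact hM.1 x y hxy
    · intro x y hxy
      by_cases hon : ∃ k, k < n ∧ v k = x
      · obtain ⟨k, hk, rfl⟩ := hon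
        rcases Nat.even_or_odd k with hpar | hpar
        · rw [keyE k hk hpar] at hxy
          have hy : y = v (k+1) := (Option.some.inj hxy).symm
          subst hy
          have := keyO (k+1) (hElt k hk hpar) (by rcases hpar with ⟨r, hr⟩; exact ⟨r, by omega⟩)
          simpa using this
        · rw [keyO k hk hpar] at hxy
          have hy : y = v (k-1) := (Option.some.inj hxy).symm
          subst hy
          have h1 : 1 ≤ k := by rw [Nat.odd_iff] at hpar; omega
          have := keyE (k-1) (by omega) (by rw [Nat.even_iff]; rw [Nat.odd_iff] at hpar; omega)
          have he : k - 1 + 1 = k := by omega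
          rwa [he] at this
      · push_neg at hon
        rw [key2 x (fun k hk => hon k hk)] at hxy
        have hyoff : ∀ k, k < n → v k ≠ y := by
          intro j hj hc
          exact hoffM x hon j hj (by rw [hc]; exact hxy)
        rw [key2 y hyoff]
        exact matching_symm hM hxy
  refine ⟨M', hmatch, ?_⟩
  set g : α → ℤ := fun x => voteO I x (M x) (M' x) with hg
  have hvmem : ∀ k, k < n → v k ∈ I.W ∪ I.F := by
    intro k hk
    exact adj_mem_left (hedge k hk).1
  set Pset := (Finset.range n).image v with hPset
  have hPsub : Pset ⊆ I.W ∪ I.F := by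
    intro x hx
    rw [hPset, Finset.mem_image] at hx
    obtain ⟨k, hk, rfl⟩ := hx
    exact hvmem k (Finset.mem_range.mp hk)
  have hsplit : margin I M M' = (∑ x ∈ (I.W ∪ I.F) \ Pset, g x) + ∑ x ∈ Pset, g x :=
    (Finset.sum_sdiff hPsub).symm
  have himg : ∑ x ∈ Pset, g x = ∑ k ∈ Finset.range n, g (v k) := by
    rw [hPset]
    rw [Finset.sum_image]
    intro i hi j hj hij
    exact hinj i j (Finset.mem_range.mp hi) (Finset.mem_range.mp hj) hij
  have hrest : ∑ x ∈ (I.W ∪ I.F) \ Pset, g x = 0 := by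
    apply Finset.sum_eq_zero
    intro x hx
    have hxoff : ∀ k, k < n → v k ≠ x := by
      intro k hk hc
      rw [Finset.mem_sdiff, hPset] at hx
      exact hx.2 (Finset.mem_image.mpr ⟨k, Finset.mem_range.mpr hk, hc⟩)
    rw [hg]; simp only
    rw [key2 x hxoff, voteO_self]
  have hpairsum : ∑ k ∈ Finset.range n, g (v k)
      = ∑ k ∈ Finset.range m, (g (v (2*k)) + g (v (2*k+1))) := by
    rw [hn, sum_range_two_mul]
  have hpairvote : ∀ k, k < m →
      g (v (2*k)) = voteO I (v (2*k)) (M (v (2*k))) (some (v (2*k+1))) ∧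
      g (v (2*k+1)) = voteO I (v (2*k+1)) (M (v (2*k+1))) (some (v (2*k))) := by
    intro k hk
    have h1 : 2*k < n := by omega
    have h2 : 2*k+1 < n := by omega
    constructor
    · rw [hg]; simp only; rw [keyE (2*k) h1 (even_2k k)]
    · rw [hg]; simp only; rw [keyO (2*k+1) h2 (odd_2k1 k)]
      simp
  have hpair : ∀ k, k < m → g (v (2*k)) + g (v (2*k+1)) ≤ 0 := by
    intro k hk
    obtain ⟨e1, e2⟩ := hpairvote k hk
    have hlt : 2*k < n := by omega
    rcases (hedge (2*k) hlt).2 with hc | hc | hc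
    · exact absurd hc (pEvenNe (2*k) (even_2k k) hlt)
    · rw [e1, voteO_of_better hc]
      have := voteO_le_one (I := I) (v (2*k+1)) (M (v (2*k+1))) (some (v (2*k)))
      rw [e2]; omega
    · rw [e2, voteO_of_better hc]
      have := voteO_le_one (I := I) (v (2*k)) (M (v (2*k))) (some (v (2*k+1)))
      rw [e1]; omega
  have h0 : g (v (2*0)) + g (v (2*0+1)) ≤ -2 := by
    obtain ⟨e1, e2⟩ := hpairvote 0 (by omega)
    have hmm' : MinusMinus I M (v (2*0)) (v (2*0+1)) := by simpa using hmm
    rw [e1, e2, voteO_of_better hmm'.2.2.1, voteO_of_better (mm_symm hM hmm').2.2.1]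
    omega
  have hsum1 : ∑ k ∈ Finset.range m, (g (v (2*k)) + g (v (2*k+1))) ≤ -2 := by
    have hsub : ({0} : Finset ℕ) ⊆ Finset.range m := by
      intro i hi; rw [Finset.mem_singleton] at hi; subst hi; exact Finset.mem_range.mpr (by omega)
    have hle := sum_nonpos_subset _ hsub (fun k hk => hpair k (Finset.mem_range.mp hk))
    rw [Finset.sum_singleton] at hle
    linarith
  rw [hsplit, himg, hpairsum, hrest]
  linarith

end Switch2
section Forward

variable {α : Type*} [DecidableEq α] {I : MatP α} {M : α → Option α}

lemma path_pattern {n : ℕ} {v : ℕ → α} (h : IsAltPath I M n v)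
    (h0 : ¬ M (v 0) = some (v 1)) :
    ∀ i, i < n → (M (v i) = some (v (i+1)) ↔ Odd i) := by
  intro i
  induction i with
  | zero =>
    intro _
    simp only [Nat.odd_iff]
    constructor
    · intro hc; exact absurd hc h0
    · omega
  | succ k ih =>
    intro hk
    have h1 := h.2.2.2 k (by omega)
    have h2 := ih (by omega)
    have h3 : Odd (k+1) ↔ ¬ Odd k := by
      rw [Nat.odd_add_one, Nat.not_odd_iff_even]
    tauto

lemma forward_p2 (hM : IsMatching I M) {n : ℕ} {v : ℕ → α} (hp : IsAltPath I M n v)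
    (h0 : M (v 0) = none) {i₀ : ℕ} (hi₀ : i₀ < n)
    (hmm : MinusMinus I M (v i₀) (v (i₀+1))) :
    ∃ M', IsMatching I M' ∧ margin I M M' < 0 := by
  have h0' : ¬ M (v 0) = some (v 1) := by rw [h0]; simp
  have hpat := path_pattern hp h0'
  have hieven : Even i₀ := by
    rw [Nat.even_iff]
    have := hpat i₀ hi₀
    have h2 : ¬ Odd i₀ := fun ho => hmm.2.1 (this.mpr ho)
    rw [Nat.odd_iff] at h2; omega
  obtain ⟨r, hr⟩ := hieven
  have he : 2*r = i₀ := by omega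
  apply switch_path hM r v
  · intro i j hi hj; exact hp.2.1 i j (by omega) (by omega)
  · intro i hi; exact hp.2.2.1 i (by omega)
  · intro i hi; exact hpat i (by omega)
  · rw [he]; exact hmm
  · exact Or.inl h0

lemma forward_p3 (hM : IsMatching I M) {n : ℕ} {v : ℕ → α} (hp : IsAltPath I M n v)
    (hn2 : 2 ≤ n) (hmm0 : MinusMinus I M (v 0) (v 1))
    (hmme : MinusMinus I M (v (n-1)) (v n)) :
    ∃ M', IsMatching I M' ∧ margin I M M' < 0 := by
  have hpat := path_pattern hp hmm0.2.1
  have hnodd : Odd n := by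
    have h1 := hpat (n-1) (by omega)
    have he : n - 1 + 1 = n := by omega
    rw [he] at h1
    have h2 : ¬ Odd (n-1) := fun ho => hmme.2.1 (h1.mpr ho)
    rw [Nat.odd_iff] at h2 ⊢; omega
  obtain ⟨r, hr⟩ := hnodd
  have hr1 : 1 ≤ r := by omega
  apply switch_path hM r v
  · intro i j hi hj; exact hp.2.1 i j (by omega) (by omega)
  · intro i hi; exact hp.2.2.1 i (by omega)
  · intro i hi; exact hpat i (by omega)
  · have e1 : 2*r = n - 1 := by omega
    rw [e1, show n-1+1 = n from by omega]; exact hmme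
  · exact Or.inr ⟨hr1, hmm0⟩

lemma forward_cyc (hM : IsMatching I M) {n : ℕ} {v : ℕ → α} (hc : IsAltCycle I M n v)
    {i₀ : ℕ} (hi₀ : i₀ < n) (hmm : MinusMinus I M (v i₀) (v (i₀+1))) :
    ∃ M', IsMatching I M' ∧ margin I M M' < 0 := by
  classical
  obtain ⟨hn2, hvn, hinj, hedge, halt, hwrap⟩ := hc
  have hP0ne : ¬ M (v i₀) = some (v (i₀+1)) := hmm.2.1
  have hOdd0 : ¬ Odd 0 := by simp [Nat.odd_iff]
  -- the alternation invariant is constant along the cycle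
  have hQ : ∀ i, i < n →
      ((M (v 0) = some (v 1) ↔ Odd 0) ↔ (M (v i) = some (v (i+1)) ↔ Odd i)) := by
    intro i
    induction i with
    | zero => intro _; exact Iff.rfl
    | succ k ih =>
      intro hk
      have h1 := halt k (by omega)
      have h2 := ih (by omega)
      have h3 : Odd (k+1) ↔ ¬ Odd k := by
        rw [Nat.odd_add_one, Nat.not_odd_iff_even]
      constructor
      · intro hA
        have hPk := h2.mp hA
        constructor
        · intro hQk
          rw [h3]
          intro hok
          exact (h1.mp (hPk.mpr hok)) hQk
        · intro ho1
          have hnok := h3.mp ho1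
          by_contra hnQ
          exact hnok (hPk.mp (h1.mpr hnQ))
      · intro hB
        rw [h2]
        constructor
        · intro hP
          by_contra hnok
          exact (h1.mp hP) (hB.mpr (h3.mpr hnok))
        · intro hok
          by_contra hnP
          have hQk : M (v (k+1)) = some (v (k+1+1)) := by
            by_contra hnQ
            exact hnP (h1.mpr hnQ)
          exact (h3.mp (hB.mp hQk)) hok
  have hQ' : ∀ i, i < n → (¬ M (v 0) = some (v 1) ↔ (M (v i) = some (v (i+1)) ↔ Odd i)) := by
    intro i hi
    have h1 : (M (v 0) = some (v 1) ↔ Odd 0) ↔ ¬ M (v 0) = some (v 1) := by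
      constructor
      · intro h hc; exact hOdd0 (h.mp hc)
      · intro h
        constructor
        · intro hc; exact absurd hc h
        · intro ho; exact absurd ho hOdd0
    exact h1.symm.trans (hQ i hi)
  have hpar : ∀ i, i < n → (M (v i) = some (v (i+1)) ↔ (i + i₀) % 2 = 1) := by
    intro i hi
    have hBi := hQ' i hi
    have hBi0 := hQ' i₀ hi₀
    have hcomb : (M (v i) = some (v (i+1)) ↔ Odd i) ↔ ¬ Odd i₀ := by
      rw [← hBi, hBi0]
      constructor
      · intro h ho; exact hP0ne (h.mpr ho)
      · intro h
        constructor
        · intro hc; exact absurd hc hP0ne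
        · intro ho; exact absurd ho h
    rcases Nat.even_or_odd i₀ with he0 | ho0
    · have hx1 : ¬ Odd i₀ := by rw [Nat.even_iff] at he0; rw [Nat.odd_iff]; omega
      have h4 := hcomb.mpr hx1
      rcases Nat.even_or_odd i with hei | hoi
      · have hx2 : ¬ Odd i := by rw [Nat.even_iff] at hei; rw [Nat.odd_iff]; omega
        have hr : ¬ ((i + i₀) % 2 = 1) := by rw [Nat.even_iff] at he0 hei; omega
        tauto
      · have hr : (i + i₀) % 2 = 1 := by
          rw [Nat.even_iff] at he0; rw [Nat.odd_iff] at hoi; omega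
        tauto
    · have hx1 : Odd i₀ := ho0
      have h4 : ¬ (M (v i) = some (v (i+1)) ↔ Odd i) := fun hc => (hcomb.mp hc) hx1
      rcases Nat.even_or_odd i with hei | hoi
      · have hx2 : ¬ Odd i := by rw [Nat.even_iff] at hei; rw [Nat.odd_iff]; omega
        have hr : (i + i₀) % 2 = 1 := by
          rw [Nat.even_iff] at hei; rw [Nat.odd_iff] at ho0; omega
        tauto
      · have hr : ¬ ((i + i₀) % 2 = 1) := by rw [Nat.odd_iff] at ho0 hoi; omega
        tauto
  -- n is even
  have hneven : n % 2 = 0 := by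
    have hp1 := hpar (n-1) (by omega)
    have hp0 := hpar 0 (by omega)
    simp only [Nat.zero_add] at hp0
    by_contra hodd
    by_cases h2 : i₀ % 2 = 1
    · have hA : M (v (n-1)) = some (v (n-1+1)) := hp1.mpr (by omega)
      have hB : M (v (n-1)) = some (v 0) := by
        rw [show n-1+1 = n from by omega, hvn] at hA; exact hA
      exact (hwrap.mp hB) (hp0.mpr h2)
    · have hC : ¬ M (v 0) = some (v 1) := fun hc => by have := hp0.mp hc; omega
      have hB := hwrap.mpr hC
      have hA : M (v (n-1)) = some (v (n-1+1)) := by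
        rw [show n-1+1 = n from by omega, hvn]; exact hB
      have := hp1.mp hA
      omega
  -- rotate the cycle so that the (âˆ’,âˆ’) edge is first
  have hnpos : 0 < n := by omega
  have hmodlt : ∀ s : ℕ, (i₀ + s) % n < n := fun s => Nat.mod_lt _ hnpos
  have veq : ∀ s : ℕ, v ((s+1) % n) = v ((s % n) + 1) := by
    intro s
    have h1 : (s+1) % n = (s % n + 1) % n := by
      conv_lhs => rw [Nat.add_mod]
      rw [Nat.one_mod_eq_one.mpr (by omega)]
    rcases Nat.lt_or_ge (s % n + 1) n with h | h
    · rw [h1, Nat.mod_eq_of_lt h]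
    · have h2 : s % n + 1 = n := by have := Nat.mod_lt s hnpos; omega
      rw [h1, h2, Nat.mod_self]
      exact hvn.symm
  apply switch_cycle hM (n/2) (fun j => v ((i₀ + j) % n)) (by omega)
  · intro i j hi hj he
    have hmeq : (i₀ + i) % n = (i₀ + j) % n :=
      hinj _ _ (hmodlt i) (hmodlt j) he
    have hcan : i % n = j % n := Nat.ModEq.add_left_cancel' i₀ hmeq
    rwa [Nat.mod_eq_of_lt (by omega), Nat.mod_eq_of_lt (by omega)] at hcan
  · show v ((i₀ + 2*(n/2)) % n) = v ((i₀ + 0) % n)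
    rw [show 2*(n/2) = n from by omega, Nat.add_mod_right, Nat.add_zero]
  · intro j hj
    show InGM I M (v ((i₀+j) % n)) (v ((i₀+(j+1)) % n))
    rw [show i₀+(j+1) = (i₀+j)+1 from by omega, veq (i₀+j)]
    exact hedge _ (hmodlt j)
  · intro j hj
    show M (v ((i₀+j) % n)) = some (v ((i₀+(j+1)) % n)) ↔ Odd j
    rw [show i₀+(j+1) = (i₀+j)+1 from by omega, veq (i₀+j)]
    rw [hpar _ (hmodlt j), Nat.odd_iff]
    have hdvd : ((i₀+j) % n) % 2 = (i₀+j) % 2 := Nat.mod_mod_of_dvd _ (by omega)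
    omega
  · show MinusMinus I M (v ((i₀ + 0) % n)) (v ((i₀ + 1) % n))
    rw [Nat.add_zero, veq i₀, Nat.mod_eq_of_lt hi₀]
    exact hmm

end Forward
/-- An S-witness: an alternating path in `G_M` starting with a `(−,−)` edge,
with matching edges exactly at odd positions (hence ending with a non-matching
edge since the length is odd). -/
def SWit {α : Type*} (I : MatP α) (M : α → Option α) (n : ℕ) (v : ℕ → α) : Prop :=
  Odd n ∧ (∀ i j, i ≤ n → j ≤ n → v i = v j → i = j) ∧
  (∀ i, i < n → InGM I M (v i) (v (i+1))) ∧
  (∀ i, i < n → (M (v i) = some (v (i+1)) ↔ Odd i)) ∧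
  MinusMinus I M (v 0) (v 1)

section BackA

variable {α : Type*} [DecidableEq α] {I : MatP α} {M : α → Option α}

lemma msymm_iff (hM : IsMatching I M) {x y : α} : M x = some y ↔ M y = some x :=
  ⟨fun h => matching_symm hM h, fun h => matching_symm hM h⟩

namespace SWit

variable {n : ℕ} {v : ℕ → α}

lemma odd (h : SWit I M n v) : n % 2 = 1 := Nat.odd_iff.mp h.1
lemma inj (h : SWit I M n v) : ∀ i j, i ≤ n → j ≤ n → v i = v j → i = j := h.2.1
lemma edge (h : SWit I M n v) : ∀ i, i < n → InGM I M (v i) (v (i+1)) := h.2.2.1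
lemma pat (h : SWit I M n v) : ∀ i, i < n → (M (v i) = some (v (i+1)) ↔ Odd i) := h.2.2.2.1
lemma mm (h : SWit I M n v) : MinusMinus I M (v 0) (v 1) := h.2.2.2.2

lemma pos (h : SWit I M n v) : 1 ≤ n := by have := h.odd; omega

lemma pOdd (h : SWit I M n v) : ∀ i, i % 2 = 1 → i < n → M (v i) = some (v (i+1)) :=
  fun i hi hilt => (h.pat i hilt).mpr (Nat.odd_iff.mpr hi)

lemma pNe (h : SWit I M n v) : ∀ i, i % 2 = 0 → i < n → M (v i) ≠ some (v (i+1)) := by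
  intro i hi hilt hc
  have := Nat.odd_iff.mp ((h.pat i hilt).mp hc)
  omega

lemma pPrev (hM : IsMatching I M) (h : SWit I M n v) :
    ∀ i, i % 2 = 0 → 1 ≤ i → i ≤ n → M (v i) = some (v (i-1)) := by
  intro i hpar h1 hle
  have := matching_symm hM (h.pOdd (i-1) (by omega) (by omega))
  have he : i - 1 + 1 = i := by omega
  rwa [he] at this

/-- the last edge of an S-witness is a non-matching edge -/
lemma lastNe (h : SWit I M n v) : M (v (n-1)) ≠ some (v n) := by
  intro hc
  have hp := h.pos
  have he : n - 1 + 1 = n := by omega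
  have := h.pNe (n-1) (by have := h.odd; omega) (by have := h.pos; omega)
  rw [he] at this
  exact this hc

/-- the endpoint's matching partner is determined for inner vertices -/
lemma partner_inner (hM : IsMatching I M) (h : SWit I M n v) :
    ∀ i, i ≤ n → M (v i) = some (v n) → i = n - 1 → False := by
  intro i hi hc hie
  subst hie
  have he : n - 1 + 1 = n := by have := h.pos; omega
  have := h.pNe (n-1) (by have := h.odd; omega) (by have := h.pos; omega)
  rw [he] at this
  exact this hc

lemma isAltPath (h : SWit I M n v) : IsAltPath I M n v := by
  refine ⟨h.pos, h.inj, h.edge, ?_⟩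
  intro i hi
  rw [h.pat i (by omega), h.pat (i+1) (by omega)]
  rw [Nat.odd_iff, Nat.odd_iff]
  omega

lemma prefix_ (h : SWit I M n v) {j : ℕ} (hodd : j % 2 = 1) (hle : j ≤ n) :
    SWit I M j v := by
  refine ⟨Nat.odd_iff.mpr hodd, ?_, ?_, ?_, h.mm⟩
  · intro a b ha hb; exact h.inj a b (by omega) (by omega)
  · intro i hi; exact h.edge i (by omega)
  · intro i hi; exact h.pat i (by omega)

end SWit

/-- a single (−,−) edge gives an S-witness of length 1 ending at its second vertex -/
lemma swit_of_mm (hM : IsMatching I M) {x y : α} (h : MinusMinus I M x y) :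
    SWit I M 1 (fun i => if i = 0 then x else y) := by
  have hxy : x ≠ y := adj_ne h.1
  refine ⟨⟨0, by omega⟩, ?_, ?_, ?_, ?_⟩
  · intro i j hi hj he
    interval_cases i <;> interval_cases j <;> simp_all
  · intro i hi
    have : i = 0 := by omega
    subst this
    simpa using mm_inGM h
  · intro i hi
    have : i = 0 := by omega
    subst this
    simp only [if_pos rfl, if_neg (by omega : (0:ℕ)+1 ≠ 0)]
    constructor
    · intro hc; exact absurd hc h.2.1
    · intro hc; exact absurd hc (by simp [Nat.odd_iff])
  · simpa using h

/-- sides: along a `G_M` path the bipartition classes alternate -/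
lemma alt_side {n : ℕ} {v : ℕ → α}
    (hedge : ∀ i, i < n → InGM I M (v i) (v (i+1))) :
    ∀ i, i ≤ n → ((v i ∈ I.W) ↔ ((v 0 ∈ I.W) ↔ i % 2 = 0)) := by
  intro i
  induction i with
  | zero => intro _; simp
  | succ k ih =>
    intro hk
    have h1 := ih (by omega)
    have h2 := adj_W_iff (hedge k (by omega)).1
    by_cases hv0 : v 0 ∈ I.W <;> by_cases hpar : k % 2 = 0
    · have hvk : v k ∈ I.W := by tauto
      have : ¬ (v (k+1) ∈ I.W) := by tauto
      have hp2 : ¬ ((k+1) % 2 = 0) := by omega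
      tauto
    · have hvk : ¬ (v k ∈ I.W) := by tauto
      have : v (k+1) ∈ I.W := by tauto
      have hp2 : (k+1) % 2 = 0 := by omega
      tauto
    · have hvk : ¬ (v k ∈ I.W) := by tauto
      have : v (k+1) ∈ I.W := by tauto
      have hp2 : ¬ ((k+1) % 2 = 0) := by omega
      tauto
    · have hvk : v k ∈ I.W := by tauto
      have : ¬ (v (k+1) ∈ I.W) := by tauto
      have hp2 : (k+1) % 2 = 0 := by omega
      tauto

end BackA
section BackB

variable {α : Type*} [DecidableEq α] {I : MatP α} {M : α → Option α}

/-- F1: an S-witness cannot end at an `M`-unmatched vertex (else structure (ii)) -/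
lemma swit_matched (hM : IsMatching I M)
    (H2 : ¬ ∃ (n : ℕ) (v : ℕ → α), IsAltPath I M n v ∧ M (v 0) = none ∧
          ∃ i, i < n ∧ MinusMinus I M (v i) (v (i+1)))
    {n : ℕ} {v : ℕ → α} (h : SWit I M n v) (h0 : M (v n) = none) : False := by
  have hp := h.pos
  apply H2
  refine ⟨n, fun j => v (n - j), ⟨hp, ?_, ?_, ?_⟩, ?_, ⟨n-1, by omega, ?_⟩⟩
  · intro i j hi hj he
    beta_reduce at he
    have := h.inj (n-i) (n-j) (by omega) (by omega) he
    omega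
  · intro i hi
    beta_reduce
    have e1 : n - (i+1) = n-i-1 := by omega
    have e2 : n-i-1+1 = n-i := by omega
    have hs := inGM_symm hM (h.edge (n-i-1) (by omega))
    rw [e2] at hs
    rw [e1]
    exact hs
  · intro i hi
    beta_reduce
    have e1 : n - (i+1) = n-i-1 := by omega
    have e3 : n - (i+2) = n-i-2 := by omega
    rw [e1, e3]
    have p1 := h.pat (n-i-1) (by omega)
    rw [show n-i-1+1 = n-i from by omega] at p1
    have p2 := h.pat (n-i-2) (by omega)
    rw [show n-i-2+1 = n-i-1 from by omega] at p2
    rw [msymm_iff hM, p1, msymm_iff hM, p2]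
    rw [Nat.odd_iff, Nat.odd_iff]
    have ho := h.odd
    omega
  · beta_reduce
    rw [Nat.sub_zero]; exact h0
  · beta_reduce
    have e1 : n - (n-1) = 1 := by omega
    have e2 : n - (n-1+1) = 0 := by omega
    rw [e1, e2]
    exact mm_symm hM h.mm

/-- CYC0: the start of an S-witness cannot be matched to its end (else structure (i)) -/
lemma swit_cyc0 (hM : IsMatching I M)
    (H1 : ¬ ∃ (n : ℕ) (v : ℕ → α), IsAltCycle I M n v ∧
          ∃ i, i < n ∧ MinusMinus I M (v i) (v (i+1)))
    {n : ℕ} {v : ℕ → α} (h : SWit I M n v) (hc : M (v 0) = some (v n)) : False := by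
  have hp := h.pos
  have hcs : M (v n) = some (v 0) := matching_symm hM hc
  apply H1
  refine ⟨n+1, fun j => if j ≤ n then v j else v 0, ⟨by omega, ?_, ?_, ?_, ?_, ?_⟩,
    ⟨0, by omega, ?_⟩⟩
  · beta_reduce
    rw [if_neg (by omega : ¬ n+1 ≤ n), if_pos (by omega : 0 ≤ n)]
  · intro i j hi hj he
    beta_reduce at he
    rw [if_pos (by omega : i ≤ n), if_pos (by omega : j ≤ n)] at he
    exact h.inj i j (by omega) (by omega) he
  · intro i hi
    beta_reduce
    rcases Nat.lt_or_ge i n with hin | hin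
    · rw [if_pos (by omega : i ≤ n), if_pos (by omega : i+1 ≤ n)]
      exact h.edge i hin
    · have hieq : i = n := by omega
      rw [hieq, if_pos (by omega : n ≤ n), if_neg (by omega : ¬ n+1 ≤ n)]
      exact ⟨hM.1 _ _ hcs, Or.inl hcs⟩
  · intro i hi
    beta_reduce
    rcases Nat.lt_or_ge (i+2) (n+1) with hin | hin
    · rw [if_pos (by omega : i ≤ n), if_pos (by omega : i+1 ≤ n), if_pos (by omega : i+2 ≤ n)]
      rw [h.pat i (by omega), h.pat (i+1) (by omega), Nat.odd_iff, Nat.odd_iff]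
      omega
    · have : i = n - 1 := by omega
      subst this
      rw [if_pos (by omega : n-1 ≤ n), if_pos (by omega : n-1+1 ≤ n),
        if_neg (by omega : ¬ n-1+2 ≤ n)]
      rw [show n-1+1 = n from by omega]
      constructor
      · intro hx
        exact absurd hx (h.lastNe)
      · intro hx
        exact absurd hcs hx
  · beta_reduce
    rw [if_pos (by omega : n+1-1 ≤ n), if_pos (by omega : 0 ≤ n), if_pos (by omega : 1 ≤ n)]
    rw [show n+1-1 = n from by omega]
    constructor
    · intro _; exact h.pNe 0 (by omega) (by omega)
    · intro _; exact hcs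
  · beta_reduce
    rw [if_pos (by omega : 0 ≤ n), if_pos (by omega : 0+1 ≤ n)]
    exact h.mm

end BackB
section BackC

variable {α : Type*} [DecidableEq α] {I : MatP α} {M : α → Option α}

/-- Two disjoint S-witnesses whose endpoints are matched to each other give structure (iii). -/
lemma swit_concat (hM : IsMatching I M)
    (H3 : ¬ ∃ (n : ℕ) (v : ℕ → α), IsAltPath I M n v ∧ 2 ≤ n ∧
          MinusMinus I M (v 0) (v 1) ∧ MinusMinus I M (v (n-1)) (v n))
    {p q : ℕ} {P Q : ℕ → α} (hP : SWit I M p P) (hQ : SWit I M q Q)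
    (hmatch : M (P p) = some (Q q))
    (hdisj : ∀ j, j ≤ q → ∀ i, i ≤ p → Q j ≠ P i) : False := by
  have hp1 := hP.pos
  have hq1 := hQ.pos
  have hpo := hP.odd
  have hqo := hQ.odd
  set n := p + 1 + q with hn
  have hWpat : ∀ i, i < n →
      (M ((fun j => if j ≤ p then P j else Q (p+1+q-j)) i)
        = some ((fun j => if j ≤ p then P j else Q (p+1+q-j)) (i+1)) ↔ Odd i) := by
    intro i hi
    beta_reduce
    rcases Nat.lt_or_ge i p with hip | hip
    · rw [if_pos (by omega : i ≤ p), if_pos (by omega : i+1 ≤ p)]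
      exact hP.pat i hip
    rcases Nat.eq_or_lt_of_le hip with hieq | hip'
    · rw [if_pos (by omega : i ≤ p), if_neg (by omega : ¬ i+1 ≤ p)]
      rw [show p+1+q-(i+1) = q from by omega, ← hieq]
      constructor
      · intro _; exact Nat.odd_iff.mpr (by omega)
      · intro _; exact hmatch
    · rw [if_neg (by omega : ¬ i ≤ p), if_neg (by omega : ¬ i+1 ≤ p)]
      have e1 : p+1+q-(i+1) = (p+1+q-i) - 1 := by omega
      have ht : p+1+q-i ≤ q := by omega
      have ht1 : 1 ≤ p+1+q-i := by omega
      rw [e1, msymm_iff hM]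
      have hpp := hQ.pat (p+1+q-i-1) (by omega)
      rw [show p+1+q-i-1+1 = p+1+q-i from by omega] at hpp
      rw [hpp, Nat.odd_iff, Nat.odd_iff]
      omega
  apply H3
  refine ⟨n, fun j => if j ≤ p then P j else Q (p+1+q-j), ⟨by omega, ?_, ?_, ?_⟩,
    by omega, ?_, ?_⟩
  · intro i j hi hj he
    beta_reduce at he
    by_cases hip : i ≤ p <;> by_cases hjp : j ≤ p
    · rw [if_pos hip, if_pos hjp] at he; exact hP.inj i j (by omega) (by omega) he
    · rw [if_pos hip, if_neg hjp] at he
      exact absurd he.symm (hdisj (p+1+q-j) (by omega) i (by omega))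
    · rw [if_neg hip, if_pos hjp] at he
      exact absurd he (hdisj (p+1+q-i) (by omega) j (by omega))
    · rw [if_neg hip, if_neg hjp] at he
      have := hQ.inj (p+1+q-i) (p+1+q-j) (by omega) (by omega) he
      omega
  · intro i hi
    beta_reduce
    rcases Nat.lt_or_ge i p with hip | hip
    · rw [if_pos (by omega : i ≤ p), if_pos (by omega : i+1 ≤ p)]
      exact hP.edge i hip
    rcases Nat.eq_or_lt_of_le hip with hieq | hip'
    · rw [if_pos (by omega : i ≤ p), if_neg (by omega : ¬ i+1 ≤ p)]
      rw [show p+1+q-(i+1) = q from by omega, ← hieq]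
      exact ⟨hM.1 _ _ hmatch, Or.inl hmatch⟩
    · rw [if_neg (by omega : ¬ i ≤ p), if_neg (by omega : ¬ i+1 ≤ p)]
      have e1 : p+1+q-(i+1) = (p+1+q-i) - 1 := by omega
      rw [e1]
      have hs := inGM_symm hM (hQ.edge (p+1+q-i-1) (by omega))
      rw [show p+1+q-i-1+1 = p+1+q-i from by omega] at hs
      exact hs
  · intro i hi
    have h1 := hWpat i (by omega)
    have h2 := hWpat (i+1) (by omega)
    beta_reduce at h1 h2 ⊢
    rw [h1, h2, Nat.odd_iff, Nat.odd_iff]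
    omega
  · beta_reduce
    rw [if_pos (by omega : 0 ≤ p), if_pos (by omega : 1 ≤ p)]
    exact hP.mm
  · beta_reduce
    rw [if_neg (by omega : ¬ n-1 ≤ p), if_neg (by omega : ¬ n ≤ p)]
    rw [show p+1+q-(n-1) = 1 from by omega, show p+1+q-n = 0 from by omega]
    exact mm_symm hM hQ.mm

/-- Gluing an S-witness `P` whose start lies on a second S-witness `Q` (at an odd
position) with the matching edge between their endpoints gives structure (i). -/
lemma swit_glue (hM : IsMatching I M)
    (H1 : ¬ ∃ (n : ℕ) (v : ℕ → α), IsAltCycle I M n v ∧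
          ∃ i, i < n ∧ MinusMinus I M (v i) (v (i+1)))
    {p q : ℕ} {P Q : ℕ → α} (hP : SWit I M p P) (hQ : SWit I M q Q)
    (hmatch : M (P p) = some (Q q)) {b : ℕ} (hb : b < q) (hbodd : b % 2 = 1)
    (hPQ : Q b = P 0)
    (hdisj : ∀ j, b < j → j ≤ q → ∀ i, i ≤ p → Q j ≠ P i) : False := by
  have hp1 := hP.pos
  have hq1 := hQ.pos
  have hpo := hP.odd
  have hqo := hQ.odd
  have hqb2 : 2 ≤ q - b := by omega
  set n := (q - b) + p + 1 with hn
  set w : ℕ → α := fun j => if j < q - b then Q (q - j)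
    else if j ≤ q - b + p then P (j - (q - b)) else Q q with hw
  have hweq : ∀ j, j < q - b → w j = Q (q - j) := by
    intro j hj; rw [hw]; beta_reduce; rw [if_pos hj]
  have hweq2 : ∀ j, q - b ≤ j → j ≤ q - b + p → w j = P (j - (q - b)) := by
    intro j hj1 hj2; rw [hw]; beta_reduce; rw [if_neg (by omega), if_pos hj2]
  have hweq3 : w n = Q q := by
    rw [hw]; beta_reduce; rw [if_neg (by omega), if_neg (by omega)]
  have hWpat : ∀ i, i < n → (M (w i) = some (w (i+1)) ↔ Odd i) := by
    intro i hi
    rcases Nat.lt_or_ge i (q-b-1) with h1 | h1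
    · rw [hweq i (by omega), hweq (i+1) (by omega)]
      rw [show q-(i+1) = q-i-1 from by omega, msymm_iff hM]
      have hpp := hQ.pat (q-i-1) (by omega)
      rw [show q-i-1+1 = q-i from by omega] at hpp
      rw [hpp, Nat.odd_iff, Nat.odd_iff]
      omega
    rcases Nat.eq_or_lt_of_le h1 with h2 | h2
    · rw [hweq i (by omega), hweq2 (i+1) (by omega) (by omega)]
      rw [show q - i = b+1 from by omega, show i+1-(q-b) = 0 from by omega, ← hPQ]
      rw [msymm_iff hM, hQ.pat b hb, Nat.odd_iff, Nat.odd_iff]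
      omega
    rcases Nat.lt_or_ge i (q-b+p) with h3 | h3
    · rw [hweq2 i (by omega) (by omega), hweq2 (i+1) (by omega) (by omega)]
      rw [show i+1-(q-b) = (i-(q-b))+1 from by omega]
      rw [hP.pat (i-(q-b)) (by omega), Nat.odd_iff, Nat.odd_iff]
      omega
    · have h4 : i = q-b+p := by omega
      rw [hweq2 i (by omega) (by omega), show i+1 = n from by omega, hweq3]
      rw [h4, show q-b+p-(q-b) = p from by omega]
      constructor
      · intro _; exact Nat.odd_iff.mpr (by omega)
      · intro _; exact hmatch
  apply H1
  refine ⟨n, w, ⟨by omega, ?_, ?_, ?_, ?_, ?_⟩, ⟨q-b, by omega, ?_⟩⟩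
  · rw [hweq3, hweq 0 (by omega), Nat.sub_zero]
  · intro i j hi hj he
    by_cases h1 : i < q - b <;> by_cases h2 : j < q - b
    · rw [hweq i h1, hweq j h2] at he
      have := hQ.inj (q-i) (q-j) (by omega) (by omega) he
      omega
    · rw [hweq i h1, hweq2 j (by omega) (by omega)] at he
      exact absurd he (hdisj (q-i) (by omega) (by omega) _ (by omega))
    · rw [hweq2 i (by omega) (by omega), hweq j h2] at he
      exact absurd he.symm (hdisj (q-j) (by omega) (by omega) _ (by omega))
    · rw [hweq2 i (by omega) (by omega), hweq2 j (by omega) (by omega)] at he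
      have := hP.inj (i-(q-b)) (j-(q-b)) (by omega) (by omega) he
      omega
  · intro i hi
    rcases Nat.lt_or_ge i (q-b-1) with h1 | h1
    · rw [hweq i (by omega), hweq (i+1) (by omega)]
      rw [show q-(i+1) = q-i-1 from by omega]
      have hs := inGM_symm hM (hQ.edge (q-i-1) (by omega))
      rw [show q-i-1+1 = q-i from by omega] at hs
      exact hs
    rcases Nat.eq_or_lt_of_le h1 with h2 | h2
    · rw [hweq i (by omega), hweq2 (i+1) (by omega) (by omega)]
      rw [show q - i = b+1 from by omega, show i+1-(q-b) = 0 from by omega, ← hPQ]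
      have hs := inGM_symm hM (hQ.edge b hb)
      exact hs
    rcases Nat.lt_or_ge i (q-b+p) with h3 | h3
    · rw [hweq2 i (by omega) (by omega), hweq2 (i+1) (by omega) (by omega)]
      rw [show i+1-(q-b) = (i-(q-b))+1 from by omega]
      exact hP.edge (i-(q-b)) (by omega)
    · have h4 : i = q-b+p := by omega
      rw [hweq2 i (by omega) (by omega), show i+1 = n from by omega, hweq3]
      rw [h4, show q-b+p-(q-b) = p from by omega]
      exact ⟨hM.1 _ _ hmatch, Or.inl hmatch⟩
  · intro i hi
    rw [hWpat i (by omega), hWpat (i+1) (by omega), Nat.odd_iff, Nat.odd_iff]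
    omega
  · have hl := hWpat (n-1) (by omega)
    rw [show n-1+1 = n from by omega, hweq3] at hl
    have hLHS : M (w (n-1)) = some (Q q) := hl.mpr (Nat.odd_iff.mpr (by omega))
    rw [hweq 0 (by omega), hweq 1 (by omega), Nat.sub_zero]
    constructor
    · intro _ hcon
      have hQq : M (Q q) = some (P p) := matching_symm hM hmatch
      rw [hQq] at hcon
      exact (hdisj (q-1) (by omega) (by omega) p (by omega)) (Option.some.inj hcon).symm
    · intro _; exact hLHS
  · rw [hweq2 (q-b) (by omega) (by omega), hweq2 (q-b+1) (by omega) (by omega)]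
    rw [Nat.sub_self, show q-b+1-(q-b) = 1 from by omega]
    exact hP.mm

end BackC
section BackD

variable {α : Type*} [DecidableEq α] {I : MatP α} {M : α → Option α}

/-- F2 (the surgery): the endpoints of two S-witnesses are never matched to each other. -/
lemma no_S_pair (hM : IsMatching I M)
    (H1 : ¬ ∃ (n : ℕ) (v : ℕ → α), IsAltCycle I M n v ∧
          ∃ i, i < n ∧ MinusMinus I M (v i) (v (i+1)))
    (H3 : ¬ ∃ (n : ℕ) (v : ℕ → α), IsAltPath I M n v ∧ 2 ≤ n ∧
          MinusMinus I M (v 0) (v 1) ∧ MinusMinus I M (v (n-1)) (v n)) :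
    ∀ N p q (P Q : ℕ → α), p + q ≤ N →
      SWit I M p P → SWit I M q Q → M (Q q) = some (P p) → False := by
  intro N
  induction N with
  | zero =>
    intro p q P Q hle hP hQ _
    have := hP.pos; have := hQ.pos; omega
  | succ N ih =>
    intro p q P Q hle hP hQ hmatch
    classical
    have hp1 := hP.pos
    have hq1 := hQ.pos
    have hpo := hP.odd
    have hqo := hQ.odd
    have hmatch' : M (P p) = some (Q q) := matching_symm hM hmatch
    have hQqP : ∀ i, i ≤ p → P i ≠ Q q := by
      intro i hi hc
      have hMi : M (P i) = some (P p) := by rw [hc]; exact hmatch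
      by_cases hip : i = p
      · subst hip
        exact I.adj_loopless _ (hM.1 _ _ hMi)
      have hilt : i < p := by omega
      by_cases hpar : i % 2 = 1
      · have hstep := hP.pOdd i hpar hilt
        have he := hP.inj (i+1) p (by omega) (le_refl p)
          (Option.some.inj (hstep.symm.trans hMi))
        omega
      · by_cases hi0 : i = 0
        · subst hi0
          exact swit_cyc0 hM H1 hP hMi
        · have hstep := hP.pPrev hM i (by omega) (by omega) (by omega)
          have he := hP.inj (i-1) p (by omega) (le_refl p)
            (Option.some.inj (hstep.symm.trans hMi))
          omega
    have hPpQ : ∀ j, j ≤ q → Q j ≠ P p := by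
      intro j hj hc
      have hMj : M (Q j) = some (Q q) := by rw [hc]; exact hmatch'
      by_cases hjq : j = q
      · subst hjq
        exact I.adj_loopless _ (hM.1 _ _ hMj)
      have hjlt : j < q := by omega
      by_cases hpar : j % 2 = 1
      · have hstep := hQ.pOdd j hpar hjlt
        have he := hQ.inj (j+1) q (by omega) (le_refl q)
          (Option.some.inj (hstep.symm.trans hMj))
        omega
      · by_cases hj0 : j = 0
        · subst hj0
          exact swit_cyc0 hM H1 hQ hMj
        · have hstep := hQ.pPrev hM j (by omega) (by omega) (by omega)
          have he := hQ.inj (j-1) q (by omega) (le_refl q)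
            (Option.some.inj (hstep.symm.trans hMj))
          omega
    by_cases hsh : ∃ j, j ≤ q ∧ ∃ i, i ≤ p ∧ Q j = P i
    · obtain ⟨j₀, hj₀q, hj₀⟩ := hsh
      obtain ⟨b, hble, ⟨a, hap, hba⟩, hmax⟩ :
          ∃ b, b ≤ q ∧ (∃ i, i ≤ p ∧ Q b = P i) ∧
            ∀ j, b < j → j ≤ q → ¬ ∃ i, i ≤ p ∧ Q j = P i :=
        ⟨Nat.findGreatest (fun j => ∃ i, i ≤ p ∧ Q j = P i) q, Nat.findGreatest_le q,
          Nat.findGreatest_spec (P := fun j => ∃ i, i ≤ p ∧ Q j = P i) hj₀q hj₀,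
          fun j h1 h2 =>
            Nat.findGreatest_is_greatest (P := fun j => ∃ i, i ≤ p ∧ Q j = P i) h1 h2⟩
      have hblt : b < q := by
        rcases Nat.eq_or_lt_of_le hble with heq | h
        · rw [heq] at hba
          exact absurd hba.symm (hQqP a hap)
        · exact h
      have halt : a < p := by
        rcases Nat.eq_or_lt_of_le hap with heq | h
        · rw [heq] at hba
          exact absurd hba (hPpQ b hble)
        · exact h
      have hsideP := alt_side (I := I) (M := M) hP.edge
      have hsideQ := alt_side (I := I) (M := M) hQ.edge
      have hadj := adj_W_iff (I := I) (hM.1 _ _ hmatch)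
      have hparne : a % 2 ≠ b % 2 := by
        intro hab
        have h1 := hsideP a (by omega)
        have h2 := hsideQ b (by omega)
        have h3 := hsideP p (le_refl p)
        have h4 := hsideQ q (le_refl q)
        rw [hba] at h2
        have hc1 : ¬ (p % 2 = 0) := by omega
        have hc2 : ¬ (q % 2 = 0) := by omega
        have hcd : (a % 2 = 0) ↔ (b % 2 = 0) := by omega
        have e3 : P p ∈ I.W ↔ ¬ (P 0 ∈ I.W) := by
          constructor
          · intro h hA; exact hc1 ((h3.mp h).mp hA)
          · intro h; exact h3.mpr ⟨fun hA => absurd hA h, fun hc => absurd hc hc1⟩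
        have e4 : Q q ∈ I.W ↔ ¬ (Q 0 ∈ I.W) := by
          constructor
          · intro h hB; exact hc2 ((h4.mp h).mp hB)
          · intro h; exact h4.mpr ⟨fun hB => absurd hB h, fun hc => absurd hc hc2⟩
        have e12 : ((P 0 ∈ I.W) ↔ a % 2 = 0) ↔ ((Q 0 ∈ I.W) ↔ b % 2 = 0) :=
          h1.symm.trans h2
        have hAiff : (Q 0 ∈ I.W) ↔ ¬ (P 0 ∈ I.W) := by
          constructor
          · intro hB hA
            have hnQq : ¬ (Q q ∈ I.W) := fun h => (e4.mp h) hB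
            have hPp : P p ∈ I.W := by
              by_contra hn
              exact hnQq (hadj.mpr hn)
            exact (e3.mp hPp) hA
          · intro hnA
            by_contra hnB
            have hQq : Q q ∈ I.W := e4.mpr hnB
            exact (hadj.mp hQq) (e3.mpr hnA)
        by_cases hA : P 0 ∈ I.W
        · have hnB : ¬ (Q 0 ∈ I.W) := fun hB => (hAiff.mp hB) hA
          by_cases hc : a % 2 = 0
          · exact hnB ((e12.mp (iff_of_true hA hc)).mpr (hcd.mp hc))
          · have hnc2 : ¬ (b % 2 = 0) := fun h => hc (hcd.mpr h)
            exact hc ((e12.mpr (iff_of_false hnB hnc2)).mp hA)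
        · have hB : Q 0 ∈ I.W := hAiff.mpr hA
          by_cases hc : a % 2 = 0
          · exact hA ((e12.mpr (iff_of_true hB (hcd.mp hc))).mpr hc)
          · exact (fun h => hc (hcd.mpr h)) ((e12.mp (iff_of_false hA hc)).mp hB)
      by_cases hbpar : b % 2 = 1
      · by_cases ha0 : a = 0
        · subst ha0
          exact swit_glue hM H1 hP hQ hmatch' hblt hbpar hba
            (fun j h1 h2 i hi hc => hmax j h1 h2 ⟨i, hi, hc⟩)
        · have hMa : M (P a) = some (P (a-1)) :=
            hP.pPrev hM a (by omega) (by omega) (by omega)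
          have hMb : M (Q b) = some (Q (b+1)) := hQ.pOdd b hbpar hblt
          rw [hba] at hMb
          have he : P (a-1) = Q (b+1) := Option.some.inj (hMa.symm.trans hMb)
          exact hmax (b+1) (by omega) (by omega) ⟨a-1, by omega, he.symm⟩
      · by_cases hb0 : b = 0
        · subst hb0
          have hapar : a % 2 = 1 := by omega
          refine swit_glue hM H1 hQ hP hmatch halt hapar hba.symm ?_
          intro j h1 h2 i hi hc
          by_cases hi0 : i = 0
          · subst hi0
            rw [hba] at hc
            have := hP.inj j a (by omega) (by omega) hc
            omega
          · exact hmax i (by omega) hi ⟨j, h2, hc.symm⟩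
        · have hMb : M (Q b) = some (Q (b-1)) :=
            hQ.pPrev hM b (by omega) (by omega) (by omega)
          rw [hba] at hMb
          have hMrev : M (Q (b-1)) = some (P a) := matching_symm hM hMb
          have hPa : SWit I M a P := hP.prefix_ (by omega) (by omega)
          have hQb : SWit I M (b-1) Q := hQ.prefix_ (by omega) (by omega)
          exact ih a (b-1) P Q (by omega) hPa hQb hMrev
    · push_neg at hsh
      exact swit_concat hM H3 hP hQ hmatch' (fun j hj i hi => hsh j hj i hi)

end BackD
/-- `x` is reachable as the far end of an S-witness. -/
def Sx {α : Type*} (I : MatP α) (M : α → Option α) (x : α) : Prop :=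
  ∃ (n : ℕ) (v : ℕ → α), SWit I M n v ∧ v n = x

section BackE

variable {α : Type*} [DecidableEq α] {I : MatP α} {M : α → Option α}

lemma sx_of_mm (hM : IsMatching I M) {x y : α} (h : MinusMinus I M x y) :
    Sx I M x ∧ Sx I M y := by
  constructor
  · exact ⟨1, _, swit_of_mm hM (mm_symm hM h), by simp⟩
  · exact ⟨1, _, swit_of_mm hM h, by simp⟩

lemma sx_matched (hM : IsMatching I M)
    (H2 : ¬ ∃ (n : ℕ) (v : ℕ → α), IsAltPath I M n v ∧ M (v 0) = none ∧
          ∃ i, i < n ∧ MinusMinus I M (v i) (v (i+1)))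
    {x : α} (hx : Sx I M x) : M x ≠ none := by
  obtain ⟨n, v, hv, rfl⟩ := hx
  exact fun h0 => swit_matched hM H2 hv h0

lemma sx_nopair (hM : IsMatching I M)
    (H1 : ¬ ∃ (n : ℕ) (v : ℕ → α), IsAltCycle I M n v ∧
          ∃ i, i < n ∧ MinusMinus I M (v i) (v (i+1)))
    (H3 : ¬ ∃ (n : ℕ) (v : ℕ → α), IsAltPath I M n v ∧ 2 ≤ n ∧
          MinusMinus I M (v 0) (v 1) ∧ MinusMinus I M (v (n-1)) (v n))
    {x s : α} (hx : Sx I M x) (hs : Sx I M s) (hms : M s = some x) : False := by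
  obtain ⟨n, v, hv, rfl⟩ := hx
  obtain ⟨m, w, hw, rfl⟩ := hs
  exact no_S_pair hM H1 H3 (n+m) n m v w (le_refl _) hv hw hms

lemma swit_partner_off (hM : IsMatching I M)
    (H1 : ¬ ∃ (n : ℕ) (v : ℕ → α), IsAltCycle I M n v ∧
          ∃ i, i < n ∧ MinusMinus I M (v i) (v (i+1)))
    {n : ℕ} {v : ℕ → α} (h : SWit I M n v) {a : α} (ha : M (v n) = some a) :
    ∀ i, i ≤ n → v i ≠ a := by
  intro i hi hc
  have hp1 := h.pos
  have hpo := h.odd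
  have hMi : M (v i) = some (v n) := by rw [hc]; exact matching_symm hM ha
  by_cases hin : i = n
  · subst hin
    exact I.adj_loopless _ (hM.1 _ _ hMi)
  have hilt : i < n := by omega
  by_cases hpar : i % 2 = 1
  · have hstep := h.pOdd i hpar hilt
    have he := h.inj (i+1) n (by omega) (le_refl n)
      (Option.some.inj (hstep.symm.trans hMi))
    omega
  · by_cases hi0 : i = 0
    · subst hi0
      exact swit_cyc0 hM H1 h hMi
    · have hstep := h.pPrev hM i (by omega) (by omega) (by omega)
      have he := h.inj (i-1) n (by omega) (le_refl n)
        (Option.some.inj (hstep.symm.trans hMi))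
      omega

/-- F3: propagation of reachability across the matching and a `G_M` edge. -/
lemma sx_extend (hM : IsMatching I M)
    (H1 : ¬ ∃ (n : ℕ) (v : ℕ → α), IsAltCycle I M n v ∧
          ∃ i, i < n ∧ MinusMinus I M (v i) (v (i+1)))
    {s a b : α} (hs : Sx I M s) (hsa : M s = some a) (hadj : I.adj a b)
    (hnab : M a ≠ some b)
    (hbet : Better I a (some b) (M a) ∨ Better I b (some a) (M b)) :
    Sx I M b := by
  obtain ⟨p, P, hP, rfl⟩ := hs
  have hp1 := hP.pos
  have hpo := hP.odd
  have hoff := swit_partner_off hM H1 hP hsa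
  have hab : a ≠ b := adj_ne hadj
  by_cases hbP : ∃ j, j ≤ p ∧ P j = b
  · obtain ⟨j, hjp, hjb⟩ := hbP
    by_cases hjpar : j % 2 = 1
    · exact ⟨j, P, hP.prefix_ hjpar hjp, hjb⟩
    · exfalso
      have hside := alt_side (I := I) (M := M) hP.edge
      have h3 := hside p (le_refl p)
      have hj := hside j hjp
      have hadjPa := adj_W_iff (I := I) (hM.1 _ _ hsa)
      have hadjab := adj_W_iff (I := I) hadj
      rw [hjb] at hj
      have hc1 : ¬ (p % 2 = 0) := by omega
      have hc2 : j % 2 = 0 := by omega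
      -- P p side opposite P 0 ; a opposite P p so same as P 0 ; b opposite a so opposite P 0
      -- but b = P j with j even has same side as P 0 : contradiction
      by_cases hA : P 0 ∈ I.W
      · have hPp : ¬ (P p ∈ I.W) := fun h => hc1 ((h3.mp h).mp hA)
        have haW : a ∈ I.W := by
          by_contra hn
          exact hPp (by rw [hadjPa]; exact hn)
        have hbW : ¬ (b ∈ I.W) := fun h => (hadjab.mp haW) h
        exact hbW (hj.mpr (iff_of_true hA hc2))
      · have hPp : P p ∈ I.W := h3.mpr ⟨fun h => absurd h hA, fun h => absurd h hc1⟩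
        have haW : ¬ (a ∈ I.W) := hadjPa.mp hPp
        have hbW : b ∈ I.W := by
          by_contra hn
          exact haW (by rw [hadjab]; exact hn)
        exact hA ((hj.mp hbW).mpr hc2)
  · push_neg at hbP
    refine ⟨p+2, fun i => if i ≤ p then P i else if i = p+1 then a else b, ?_, ?_⟩
    · refine ⟨by rw [Nat.odd_iff]; omega, ?_, ?_, ?_, ?_⟩
      · intro i j hi hj he
        beta_reduce at he
        by_cases h1 : i ≤ p <;> by_cases h2 : j ≤ p
        · rw [if_pos h1, if_pos h2] at he; exact hP.inj i j (by omega) (by omega) he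
        · rw [if_pos h1, if_neg h2] at he
          by_cases h3 : j = p+1
          · rw [if_pos h3] at he; exact absurd he (hoff i (by omega))
          · rw [if_neg h3] at he; exact absurd he (hbP i (by omega))
        · rw [if_neg h1, if_pos h2] at he
          by_cases h3 : i = p+1
          · rw [if_pos h3] at he; exact absurd he.symm (hoff j (by omega))
          · rw [if_neg h3] at he; exact absurd he.symm (hbP j (by omega))
        · by_cases h3 : i = p+1 <;> by_cases h4 : j = p+1
          · omega
          · rw [if_neg h1, if_neg h2, if_pos h3, if_neg h4] at he
            exact absurd he hab
          · rw [if_neg h1, if_neg h2, if_neg h3, if_pos h4] at he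
            exact absurd he.symm hab
          · omega
      · intro i hi
        beta_reduce
        rcases Nat.lt_or_ge i p with h1 | h1
        · rw [if_pos (by omega : i ≤ p), if_pos (by omega : i+1 ≤ p)]
          exact hP.edge i h1
        rcases Nat.eq_or_lt_of_le h1 with h2 | h2
        · rw [if_pos (by omega : i ≤ p), if_neg (by omega : ¬ i+1 ≤ p),
            if_pos (by omega : i+1 = p+1), ← h2]
          exact ⟨hM.1 _ _ hsa, Or.inl hsa⟩
        · have h3 : i = p+1 := by omega
          rw [if_neg (by omega : ¬ i ≤ p), if_pos h3, if_neg (by omega : ¬ i+1 ≤ p),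
            if_neg (by omega : ¬ i+1 = p+1)]
          exact ⟨hadj, Or.inr hbet⟩
      · intro i hi
        beta_reduce
        rcases Nat.lt_or_ge i p with h1 | h1
        · rw [if_pos (by omega : i ≤ p), if_pos (by omega : i+1 ≤ p)]
          exact hP.pat i h1
        rcases Nat.eq_or_lt_of_le h1 with h2 | h2
        · rw [if_pos (by omega : i ≤ p), if_neg (by omega : ¬ i+1 ≤ p),
            if_pos (by omega : i+1 = p+1), ← h2]
          constructor
          · intro _; exact Nat.odd_iff.mpr (by omega)
          · intro _; exact hsa
        · have h3 : i = p+1 := by omega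
          rw [if_neg (by omega : ¬ i ≤ p), if_pos h3, if_neg (by omega : ¬ i+1 ≤ p),
            if_neg (by omega : ¬ i+1 = p+1)]
          have hMa : M a = some (P p) := matching_symm hM hsa
          constructor
          · intro hc; exact absurd hc hnab
          · intro hc
            rw [Nat.odd_iff] at hc; omega
      · beta_reduce
        rw [if_pos (by omega : 0 ≤ p), if_pos (by omega : 1 ≤ p)]
        exact hP.mm
    · beta_reduce
      rw [if_neg (by omega : ¬ p+2 ≤ p), if_neg (by omega : ¬ p+2 = p+1)]

end BackE
section Final

variable {α : Type*} [DecidableEq α] {I : MatP α} {M : α → Option α}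

lemma backward_popular (hM : IsMatching I M)
    (H1 : ¬ ∃ (n : ℕ) (v : ℕ → α), IsAltCycle I M n v ∧
          ∃ i, i < n ∧ MinusMinus I M (v i) (v (i+1)))
    (H2 : ¬ ∃ (n : ℕ) (v : ℕ → α), IsAltPath I M n v ∧ M (v 0) = none ∧
          ∃ i, i < n ∧ MinusMinus I M (v i) (v (i+1)))
    (H3 : ¬ ∃ (n : ℕ) (v : ℕ → α), IsAltPath I M n v ∧ 2 ≤ n ∧
          MinusMinus I M (v 0) (v 1) ∧ MinusMinus I M (v (n-1)) (v n)) :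
    Popular I M := by
  intro M' hM'
  classical
  set px : α → Prop := fun x => ∃ s, Sx I M s ∧ M s = some x with hpxdef
  set af : α → ℤ := fun x => if Sx I M x then 1 else if px x then -1 else 0 with hafdef
  set g : α → ℤ := fun x => voteO I x (M x) (M' x) with hgdef
  have hnotboth : ∀ x, px x → ¬ Sx I M x := by
    rintro x ⟨s, hs, hms⟩ hx
    exact sx_nopair hM H1 H3 hx hs hms
  have haf1 : ∀ x, Sx I M x → af x = 1 := by
    intro x hx; simp only [hafdef]; rw [if_pos hx]
  have hafm1 : ∀ x, px x → af x = -1 := by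
    intro x hx; simp only [hafdef]; rw [if_neg (hnotboth x hx), if_pos hx]
  have haf0 : ∀ x, ¬ Sx I M x → ¬ px x → af x = 0 := by
    intro x h1 h2; simp only [hafdef]; rw [if_neg h1, if_neg h2]
  have haflb : ∀ x, -1 ≤ af x := by
    intro x; simp only [hafdef]; split_ifs <;> omega
  have hafnn : ∀ x, ¬ px x → 0 ≤ af x := by
    intro x hx; simp only [hafdef]; split_ifs <;> omega
  have hafunm : ∀ x, M x = none → af x = 0 := by
    intro x h0
    refine haf0 x (fun hx => (sx_matched hM H2 hx) h0) ?_
    rintro ⟨s, hs, hms⟩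
    have := matching_symm hM hms
    rw [h0] at this
    exact nomatch this
  set WF := I.W ∪ I.F with hWF
  set pA : α → Option α := fun x => if Sx I M x ∨ px x then M x else none with hpAdef
  have hApair : ∀ x ∈ WF, ∀ y, pA x = some y → y ∈ WF ∧ pA y = some x ∧ y ≠ x := by
    intro x hxW y hy
    simp only [hpAdef] at hy
    by_cases hgd : Sx I M x ∨ px x
    · rw [if_pos hgd] at hy
      have hadj := hM.1 _ _ hy
      have hyW : y ∈ WF := adj_mem_left (I.adj_symm _ _ hadj)
      have hyx : y ≠ x := by
        rintro rfl
        exact I.adj_loopless _ hadj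
      have hgy : Sx I M y ∨ px y := by
        rcases hgd with hSx | hpx
        · exact Or.inr ⟨x, hSx, hy⟩
        · obtain ⟨s, hs, hms⟩ := hpx
          have h1 : M x = some s := matching_symm hM hms
          rw [hy] at h1
          exact Or.inl ((Option.some.inj h1) ▸ hs)
      refine ⟨hyW, ?_, hyx⟩
      simp only [hpAdef]
      rw [if_pos hgy]
      exact matching_symm hM hy
    · rw [if_neg hgd] at hy
      exact nomatch hy
  have hafpair : ∀ x ∈ WF, ∀ y, pA x = some y → af x + af y = 0 := by
    intro x _ y hy
    simp only [hpAdef] at hy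
    by_cases hgd : Sx I M x ∨ px x
    · rw [if_pos hgd] at hy
      by_cases hSx : Sx I M x
      · rw [haf1 x hSx, hafm1 y ⟨x, hSx, hy⟩]
        omega
      · have hpx : px x := by tauto
        obtain ⟨s, hs, hms⟩ := hpx
        have h1 : M x = some s := matching_symm hM hms
        rw [hy] at h1
        rw [hafm1 x ⟨s, hs, hms⟩, haf1 y ((Option.some.inj h1) ▸ hs)]
        omega
    · rw [if_neg hgd] at hy
      exact nomatch hy
  have hafnone : ∀ x ∈ WF, pA x = none → af x = 0 := by
    intro x _ hy
    simp only [hpAdef] at hy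
    by_cases hgd : Sx I M x ∨ px x
    · rw [if_pos hgd] at hy
      exact hafunm x hy
    · push_neg at hgd
      exact haf0 x hgd.1 hgd.2
  have hsum_af : ∑ x ∈ WF, af x = 0 := by
    have hA1 := pair_sum_nonneg WF.card WF af pA (le_refl _) hApair
      (fun x hx h => le_of_eq (hafnone x hx h).symm)
      (fun x hx y hy => le_of_eq (hafpair x hx y hy).symm)
    have hA2 := pair_sum_nonneg WF.card WF (fun x => -af x) pA (le_refl _) hApair
      (fun x hx h => by show (0:ℤ) ≤ -af x; rw [hafnone x hx h]; omega)
      (fun x hx y hy => by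
        show (0:ℤ) ≤ -af x + -af y
        have := hafpair x hx y hy
        omega)
    rw [Finset.sum_neg_distrib] at hA2
    omega
  -- the main inequality : each M'-pair (and M'-unmatched vertex) has
  -- vote + witness ≥ 0
  have hM'pair : ∀ x ∈ WF, ∀ y, M' x = some y → y ∈ WF ∧ M' y = some x ∧ y ≠ x := by
    intro x _ y hy
    have hadj := hM'.1 _ _ hy
    refine ⟨adj_mem_left (I.adj_symm _ _ hadj), hM'.2 _ _ hy, ?_⟩
    rintro rfl
    exact I.adj_loopless _ hadj
  have hmain1 : ∀ x ∈ WF, M' x = none → 0 ≤ g x + af x := by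
    intro x _ h0
    have hg : g x = voteO I x (M x) none := by simp only [hgdef]; rw [h0]
    cases hMx : M x with
    | none =>
      rw [hg, hMx, voteO_self, hafunm x hMx]
      omega
    | some a =>
      rw [hg, hMx, voteO_some_none]
      have := haflb x
      omega
  have hmain2 : ∀ x ∈ WF, ∀ y, M' x = some y → 0 ≤ (g x + af x) + (g y + af y) := by
    intro x _ y hxy
    have hyx : M' y = some x := hM'.2 _ _ hxy
    have hadj : I.adj x y := hM'.1 _ _ hxy
    have hge : g x = voteO I x (M x) (some y) := by simp only [hgdef]; rw [hxy]
    have hgey : g y = voteO I y (M y) (some x) := by simp only [hgdef]; rw [hyx]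
    by_cases hMxy : M x = some y
    · have hMyx : M y = some x := matching_symm hM hMxy
      have e1 : g x = 0 := by rw [hge, hMxy, voteO_self]
      have e2 : g y = 0 := by rw [hgey, hMyx, voteO_self]
      have e3 : 0 ≤ af x + af y := by
        by_cases hSx : Sx I M x
        · rw [haf1 x hSx, hafm1 y ⟨x, hSx, hMxy⟩]; omega
        · by_cases hpx : px x
          · obtain ⟨s, hs, hms⟩ := hpx
            have h1 : M x = some s := matching_symm hM hms
            rw [hMxy] at h1
            rw [hafm1 x ⟨s, hs, hms⟩, haf1 y ((Option.some.inj h1) ▸ hs)]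
            omega
          · have h1 : ¬ Sx I M y := fun hSy => hpx ⟨y, hSy, hMyx⟩
            have h2 : ¬ px y := by
              rintro ⟨s, hs, hms⟩
              have h3 : M y = some s := matching_symm hM hms
              rw [hMyx] at h3
              exact hSx ((Option.some.inj h3) ▸ hs)
            rw [haf0 x hSx hpx, haf0 y h1 h2]
            omega
      omega
    · have hMyx : M y ≠ some x := fun hc => hMxy (matching_symm hM hc)
      by_cases hbx : Better I x (some y) (M x) <;> by_cases hby : Better I y (some x) (M y)
      · have hmm : MinusMinus I M x y := ⟨hadj, hMxy, hbx, hby⟩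
        obtain ⟨hSx, hSy⟩ := sx_of_mm hM hmm
        have e1 : g x = -1 := by rw [hge]; exact voteO_of_better hbx
        have e2 : g y = -1 := by rw [hgey]; exact voteO_of_better hby
        rw [e1, e2, haf1 x hSx, haf1 y hSy]
        omega
      · have e1 : g x = -1 := by rw [hge]; exact voteO_of_better hbx
        have e2 : g y = 1 := by
          rw [hgey]; exact vote_pm hM (I.adj_symm _ _ hadj) hMyx hby
        have e3 : 0 ≤ af x + af y := by
          by_cases hpx : px x
          · obtain ⟨s, hs, hms⟩ := hpx
            have hSy := sx_extend hM H1 hs hms hadj hMxy (Or.inl hbx)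
            rw [hafm1 x ⟨s, hs, hms⟩, haf1 y hSy]
            omega
          · by_cases hpy : px y
            · obtain ⟨s, hs, hms⟩ := hpy
              have hSx := sx_extend hM H1 hs hms (I.adj_symm _ _ hadj) hMyx
                (Or.inr hbx)
              rw [haf1 x hSx, hafm1 y ⟨s, hs, hms⟩]
              omega
            · have := hafnn x hpx
              have := hafnn y hpy
              omega
        omega
      · have e1 : g x = 1 := by rw [hge]; exact vote_pm hM hadj hMxy hbx
        have e2 : g y = -1 := by rw [hgey]; exact voteO_of_better hby
        have e3 : 0 ≤ af x + af y := by
          by_cases hpy : px y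
          · obtain ⟨s, hs, hms⟩ := hpy
            have hSx := sx_extend hM H1 hs hms (I.adj_symm _ _ hadj) hMyx
              (Or.inl hby)
            rw [haf1 x hSx, hafm1 y ⟨s, hs, hms⟩]
            omega
          · by_cases hpx : px x
            · obtain ⟨s, hs, hms⟩ := hpx
              have hSy := sx_extend hM H1 hs hms hadj hMxy (Or.inr hby)
              rw [hafm1 x ⟨s, hs, hms⟩, haf1 y hSy]
              omega
            · have := hafnn x hpx
              have := hafnn y hpy
              omega
        omega
      · have e1 : g x = 1 := by rw [hge]; exact vote_pm hM hadj hMxy hbx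
        have e2 : g y = 1 := by
          rw [hgey]; exact vote_pm hM (I.adj_symm _ _ hadj) hMyx hby
        have := haflb x
        have := haflb y
        omega
  have hmain := pair_sum_nonneg WF.card WF (fun x => g x + af x) M' (le_refl _)
    hM'pair hmain1 hmain2
  have hsplit : ∑ x ∈ WF, (g x + af x) = (∑ x ∈ WF, g x) + ∑ x ∈ WF, af x :=
    Finset.sum_add_distrib
  have hmargin : margin I M M' = ∑ x ∈ WF, g x := by
    rw [margin, hWF]
  rw [hmargin]
  rw [hsplit] at hmain
  omega

end Final

/-- Huang–Kavitha characterization: a matching `M` is popular iff the subgraph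
`G_M` (obtained by deleting all `(+,+)` edges) contains (i) no alternating cycle
with a `(−,−)` edge, (ii) no alternating path starting from an `M`-unmatched
vertex containing a `(−,−)` edge, and (iii) no alternating path both of whose
end edges are `(−,−)` edges. -/
theorem popular_iff_huang_kavitha {α : Type*} [DecidableEq α]
    (I : MatP α) (M : α → Option α) (hM : IsMatching I M) :
    Popular I M ↔
      ((¬ ∃ (n : ℕ) (v : ℕ → α), IsAltCycle I M n v ∧
          ∃ i, i < n ∧ MinusMinus I M (v i) (v (i+1))) ∧
       (¬ ∃ (n : ℕ) (v : ℕ → α), IsAltPath I M n v ∧ M (v 0) = none ∧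
          ∃ i, i < n ∧ MinusMinus I M (v i) (v (i+1))) ∧
       (¬ ∃ (n : ℕ) (v : ℕ → α), IsAltPath I M n v ∧ 2 ≤ n ∧
          MinusMinus I M (v 0) (v 1) ∧ MinusMinus I M (v (n-1)) (v n))) := by
  constructor
  · intro hpop
    refine ⟨?_, ?_, ?_⟩
    · rintro ⟨n, v, hc, i, hi, hmm⟩
      obtain ⟨M', hM'm, hlt⟩ := forward_cyc hM hc hi hmm
      exact absurd (hpop M' hM'm) (not_le.mpr hlt)
    · rintro ⟨n, v, hp, h0, i, hi, hmm⟩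
      obtain ⟨M', hM'm, hlt⟩ := forward_p2 hM hp h0 hi hmm
      exact absurd (hpop M' hM'm) (not_le.mpr hlt)
    · rintro ⟨n, v, hp, hn2, hmm0, hmme⟩
      obtain ⟨M', hM'm, hlt⟩ := forward_p3 hM hp hn2 hmm0 hmme
      exact absurd (hpop M' hM'm) (not_le.mpr hlt)
  · rintro ⟨H1, H2, H3⟩
    exact backward_popular hM H1 H2 H3
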